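/- arXiv:2110.08677 — 9 statements merged into one kernel-verified Lean document; each statement's English description precedes it below -/
import Mathlib

section
/- Fix an integer D ≥ 2. There is a constant C = C(D) > 0 such that the following holds. Let d, n ∈ ℕ with 2 ≤ D ≤ d ≤ n, and let m ≥ C·n^D/d^{D−1}. Let g_1, …, g_m be homogeneous degree-D polynomials in variables x_1, …, x_n whose coefficients, together with scalars b_1, …, b_m, are sampled independently from (possibly different) n^{2d}-nice distributions on ℚ. Then with probability at least 1 − n^{−d}, the generated ideal of {g_1 − b_1, …, g_m − b_m} at degree d is complete, i.e., every homogeneous polynomial of degree d in x_1, …, x_n can be written as Σ_{i=1}^m a_i·(g_i − b_i) with each a_i a polynomial of degree at most d − D. -/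
open MeasureTheory
open scoped ENNReal

/-- A probability distribution `ν` on `ℚ` is `B`-nice if it is supported on rationals
expressible as `p/q` with `|p|, |q| ≤ 2^B`, and every atom has probability at most `B⁻¹⁰⁰`. -/
def IsNiceDistribution (B : ℕ) (ν : Measure ℚ) : Prop :=
  IsProbabilityMeasure ν ∧
  ν {r : ℚ | ∃ p q : ℤ, q ≠ 0 ∧ r = (p : ℚ) / (q : ℚ) ∧ p.natAbs ≤ 2 ^ B ∧ q.natAbs ≤ 2 ^ B} = 1 ∧
  ∀ r : ℚ, ν {r} ≤ 1 / (B : ℝ≥0∞) ^ 100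

/-- The monomial `x^s` corresponding to a multiset (of size `D`) of variables. -/
noncomputable def symMonomial {n D : ℕ} (s : Sym (Fin n) D) : MvPolynomial (Fin n) ℚ :=
  (Multiset.map MvPolynomial.X s.1).prod

open MeasureTheory MvPolynomial
open scoped ENNReal

lemma measurableSet_all {α : Type*} [MeasurableSpace α] [Countable α]
    [MeasurableSingletonClass α] (S : Set α) : MeasurableSet S :=
  S.to_countable.measurableSet

lemma finset_measure_le {α : Type*} [MeasurableSpace α] (μ : Measure α) (t : Finset α)
    (ε : ℝ≥0∞) (h : ∀ r, μ {r} ≤ ε) : μ ↑t ≤ t.card * ε := by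
  have : (↑t : Set α) = ⋃ x ∈ t, {x} := by ext x; simp
  rw [this]
  refine le_trans (measure_biUnion_finset_le t _) ?_
  calc ∑ x ∈ t, μ {x} ≤ ∑ _x ∈ t, ε := Finset.sum_le_sum fun x _ => h x
  _ = t.card * ε := by simp [mul_comm]

lemma schwartz_zippel_fin : ∀ (N : ℕ) (μ : Fin N → Measure ℚ),
    (∀ i, IsProbabilityMeasure (μ i)) →
    ∀ (ε : ℝ≥0∞), (∀ i r, μ i {r} ≤ ε) →
    ∀ Q : MvPolynomial (Fin N) ℚ, Q ≠ 0 →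
    Measure.pi μ {x | MvPolynomial.eval x Q = 0} ≤ Q.totalDegree * ε := by
  intro N
  induction N with
  | zero =>
    intro μ _ ε hε Q hQ
    have : {x : Fin 0 → ℚ | MvPolynomial.eval x Q = 0} = ∅ := by
      ext x
      simp only [Set.mem_setOf_eq, Set.mem_empty_iff_false, iff_false]
      have hx : x = fun i : Fin 0 => (0:ℚ) := funext fun i => i.elim0
      obtain ⟨c, rfl⟩ := MvPolynomial.C_surjective (Fin 0) Q
      simp only [MvPolynomial.eval_C]
      simpa using hQ
    simp [this]
  | succ N ih =>
    intro μ hprob ε hε Q hQ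
    haveI := hprob
    haveI : ∀ i, IsProbabilityMeasure ((fun j => μ ((0:Fin (N+1)).succAbove j)) i) :=
      fun i => hprob _
    set p := MvPolynomial.finSuccEquiv ℚ N Q with hp
    have hpne : p ≠ 0 := by
      simp [hp, AddEquivClass.map_eq_zero_iff, hQ]
    set K := p.natDegree with hK
    set lead := p.leadingCoeff with hlead
    have hleadne : lead ≠ 0 := Polynomial.leadingCoeff_ne_zero.mpr hpne
    have hdeg : lead.totalDegree + K ≤ Q.totalDegree := by
      exact MvPolynomial.totalDegree_coeff_finSuccEquiv_add_le Q K (by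
        exact hleadne)
    set ν := Measure.pi (fun j => μ ((0:Fin (N+1)).succAbove j)) with hν
    haveI : IsProbabilityMeasure ν := by infer_instance
    have mp := measurePreserving_piFinSuccAbove μ 0
    set e := MeasurableEquiv.piFinSuccAbove (fun _ : Fin (N+1) => ℚ) 0 with he
    -- the event, transported
    set E' : Set (ℚ × (Fin N → ℚ)) :=
      {z | Polynomial.eval z.1 (Polynomial.map (MvPolynomial.eval z.2) p) = 0} with hE'
    have hpre : {x : Fin (N+1) → ℚ | MvPolynomial.eval x Q = 0} = e ⁻¹' E' := by
      ext x
      simp only [Set.mem_setOf_eq, Set.mem_preimage, hE', he,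
        MeasurableEquiv.piFinSuccAbove_apply]
      have hx : (MvPolynomial.eval x) Q
          = Polynomial.eval (x 0) (Polynomial.map
              (MvPolynomial.eval (Fin.tail x)) p) := by
        rw [← MvPolynomial.eval_eq_eval_mv_eval', Fin.cons_self_tail]
      rw [hx]
      simp [Fin.insertNthEquiv_symm_apply, Fin.removeNth_zero]
    rw [hpre, mp.measure_preimage (measurableSet_all E').nullMeasurableSet]
    -- split into bad-leading-coefficient part and root part
    set A : Set (ℚ × (Fin N → ℚ)) := {z | MvPolynomial.eval z.2 lead = 0} with hA
    set B : Set (ℚ × (Fin N → ℚ)) :=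
      {z | MvPolynomial.eval z.2 lead ≠ 0 ∧
        Polynomial.eval z.1 (Polynomial.map (MvPolynomial.eval z.2) p) = 0} with hB
    have hsub : E' ⊆ A ∪ B := by
      intro z hz
      by_cases hl : MvPolynomial.eval z.2 lead = 0
      · exact Or.inl hl
      · exact Or.inr ⟨hl, hz⟩
    have hAbound : ((μ 0).prod ν) A ≤ lead.totalDegree * ε := by
      have : A = Set.univ ×ˢ {y | MvPolynomial.eval y lead = 0} := by
        ext z; simp [hA]
      rw [this, Measure.prod_prod]
      simp only [measure_univ, one_mul]
      exact ih _ (fun i => hprob _) ε (fun i r => hε _ r) lead hleadne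
    have hBbound : ((μ 0).prod ν) B ≤ K * ε := by
      rw [Measure.prod_apply_symm (measurableSet_all B)]
      have hbd : ∀ y : Fin N → ℚ, (μ 0) ((fun x => (x, y)) ⁻¹' B) ≤ K * ε := by
        intro y
        by_cases hl : MvPolynomial.eval y lead = 0
        · have : ((fun x => (x, y)) ⁻¹' B) = ∅ := by
            ext x; simp [hB, hl]
          simp [this]
        · set u := Polynomial.map (MvPolynomial.eval y) p with hu
          have hune : u ≠ 0 := by
            intro h0
            apply hl
            have : u.coeff K = 0 := by rw [h0]; simp
            rwa [hu, Polynomial.coeff_map] at this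
          have hsubset : ((fun x => (x, y)) ⁻¹' B) ⊆ ↑u.roots.toFinset := by
            intro x hx
            simp only [Set.mem_preimage, hB, Set.mem_setOf_eq] at hx
            have hroot : u.IsRoot x := by simpa [hu, Polynomial.IsRoot] using hx.2
            simp only [Finset.mem_coe, Multiset.mem_toFinset]
            exact (Polynomial.mem_roots hune).mpr hroot
          refine le_trans (measure_mono hsubset) ?_
          refine le_trans (finset_measure_le (μ 0) _ ε (hε 0)) ?_
          have hcard : (u.roots.toFinset.card : ℝ≥0∞) ≤ (K : ℝ≥0∞) := by
            have h1 : u.roots.toFinset.card ≤ Multiset.card u.roots :=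
              Multiset.toFinset_card_le _
            have h2 : Multiset.card u.roots ≤ u.natDegree := Polynomial.card_roots' u
            have h3 : u.natDegree ≤ K := Polynomial.natDegree_map_le
            exact_mod_cast le_trans h1 (le_trans h2 h3)
          exact mul_le_mul_left hcard ε
      calc ∫⁻ y, (μ 0) ((fun x => (x, y)) ⁻¹' B) ∂ν ≤ ∫⁻ _y, (K : ℝ≥0∞) * ε ∂ν :=
            lintegral_mono hbd
      _ = K * ε := by simp
    calc ((μ 0).prod ν) E' ≤ ((μ 0).prod ν) (A ∪ B) := measure_mono hsub
    _ ≤ ((μ 0).prod ν) A + ((μ 0).prod ν) B := measure_union_le _ _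
    _ ≤ lead.totalDegree * ε + K * ε := add_le_add hAbound hBbound
    _ = ((lead.totalDegree + K : ℕ) : ℝ≥0∞) * ε := by push_cast; ring
    _ ≤ Q.totalDegree * ε := by
          exact mul_le_mul_left (by exact_mod_cast hdeg) ε

noncomputable def symExp {n k : ℕ} (s : Sym (Fin n) k) : Fin n →₀ ℕ := Multiset.toFinsupp s.1

lemma multiset_prod_X {n : ℕ} (m : Multiset (Fin n)) :
    (Multiset.map (MvPolynomial.X : Fin n → MvPolynomial (Fin n) ℚ) m).prod
      = monomial (Multiset.toFinsupp m) 1 := by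
  induction m using Multiset.induction with
  | empty => simp [MvPolynomial.monomial_zero', MvPolynomial.C_1]
  | cons a m ih =>
    rw [Multiset.map_cons, Multiset.prod_cons, ih]
    have : (X a : MvPolynomial (Fin n) ℚ) = monomial (Finsupp.single a 1) 1 := rfl
    rw [this, monomial_mul, one_mul]
    congr 1
    have : (a ::ₘ m) = {a} + m := by
      simp [Multiset.singleton_add]
    rw [this, map_add, Multiset.toFinsupp_singleton]

lemma symMonomial_eq {n D : ℕ} (s : Sym (Fin n) D) :
    symMonomial s = monomial (symExp s) 1 := multiset_prod_X s.1

lemma degree_toFinsupp {n : ℕ} (m : Multiset (Fin n)) :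
    (Multiset.toFinsupp m).degree = Multiset.card m := by
  have h1 : (Multiset.toFinsupp m).degree = (Multiset.toFinsupp m).sum (fun _ x => x) := rfl
  rw [h1]
  have := Finsupp.card_toMultiset (Multiset.toFinsupp m)
  simp only [Multiset.toFinsupp_toMultiset] at this
  exact this.symm

lemma degree_symExp {n k : ℕ} (s : Sym (Fin n) k) : (symExp s).degree = k := by
  rw [symExp, degree_toFinsupp, s.2]

lemma symExp_injective {n k : ℕ} : Function.Injective (symExp (n := n) (k := k)) := by
  intro s t h
  exact Subtype.ext (Multiset.toFinsupp.injective h)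

lemma symExp_surjective {n k : ℕ} (e : Fin n →₀ ℕ) (he : e.degree = k) :
    ∃ s : Sym (Fin n) k, symExp s = e := by
  refine ⟨⟨Finsupp.toMultiset e, ?_⟩, ?_⟩
  · rw [← degree_toFinsupp, Finsupp.toMultiset_toFinsupp, he]
  · simp [symExp, Finsupp.toMultiset_toFinsupp]

lemma homog_expand {n k : ℕ} (p : MvPolynomial (Fin n) ℚ) (hp : p.IsHomogeneous k) :
    p = ∑ s : Sym (Fin n) k, MvPolynomial.coeff (symExp s) p • monomial (symExp s) 1 := by
  ext e
  rw [MvPolynomial.coeff_sum]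
  by_cases he : e.degree = k
  · obtain ⟨s₀, rfl⟩ := symExp_surjective e he
    rw [Finset.sum_eq_single s₀]
    · simp [coeff_smul, coeff_monomial]
    · intro s _ hs
      have : symExp s ≠ symExp s₀ := fun h => hs (symExp_injective h)
      simp [coeff_smul, coeff_monomial, this]
    · intro h
      exact absurd (Finset.mem_univ s₀) h
  · rw [hp.coeff_eq_zero he]
    rw [Finset.sum_eq_zero]
    intro s _
    have : symExp s ≠ e := fun h => he (by rw [← h, degree_symExp])
    simp [coeff_smul, coeff_monomial, this]
open Finset

section Covering
variable {D d n : ℕ}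

lemma nat_le_mul_div_ceil {t a : ℕ} (ht : 0 < t) : a ≤ t * ((a + t - 1) / t) := by
  have h1 := Nat.div_add_mod (a + t - 1) t
  have h2 := Nat.mod_lt (a + t - 1) ht
  omega

lemma covering_exists (hD : 2 ≤ D) (hdD : D ≤ d) (hdn : d ≤ n) (α : Sym (Fin n) d) :
    ∃ s : Sym (Fin n) D, s.1 ≤ α.1 ∧
      ∃ b : ℕ, ∀ x ∈ s.1, (x : ℕ) / ((n + d / D - 1) / (d / D)) = b := by
  set t := d / D with ht
  set L := (n + t - 1) / t with hL
  have hD0 : 0 < D := by omega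
  have ht1 : 1 ≤ t := (Nat.one_le_div_iff hD0).mpr hdD
  have hn1 : 1 ≤ n := by omega
  have hL1 : 1 ≤ L := (Nat.one_le_div_iff (by omega)).mpr (by omega)
  have hntL : n ≤ t * L := nat_le_mul_div_ceil (by omega)
  -- pigeonhole
  set β := α.1.map (fun x : Fin n => (x : ℕ) / L) with hβ
  have hcardβ : Multiset.card β = d := by rw [hβ, Multiset.card_map, α.2]
  have hβlt : ∀ b ∈ β, b < t := by
    intro b hb
    rw [hβ] at hb
    obtain ⟨x, _, rfl⟩ := Multiset.mem_map.mp hb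
    have hx : (x : ℕ) < t * L := lt_of_lt_of_le x.2 hntL
    exact Nat.div_lt_iff_lt_mul (by omega) |>.mpr (by omega)
  have hpig : ∃ b, D ≤ Multiset.count b β := by
    by_contra hcon
    push_neg at hcon
    obtain ⟨D', hD'⟩ : ∃ D', D = D' + 1 := ⟨D - 1, by omega⟩
    have hsub : β.toFinset ⊆ Finset.range t := by
      intro b hb
      exact Finset.mem_range.mpr (hβlt b (Multiset.mem_toFinset.mp hb))
    have h1 : d = ∑ b ∈ β.toFinset, Multiset.count b β := by
      rw [Multiset.toFinset_sum_count_eq, hcardβ]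
    have h2 : ∑ b ∈ β.toFinset, Multiset.count b β ≤ β.toFinset.card * D' := by
      refine le_trans (Finset.sum_le_card_nsmul _ _ D' ?_) (by simp [mul_comm])
      intro b hb
      have := hcon b
      omega
    have h3 : β.toFinset.card ≤ t := le_trans (Finset.card_le_card hsub) (by simp)
    have h4 : t * D ≤ d := by
      rw [ht]; exact Nat.div_mul_le_self d D
    have h5 : β.toFinset.card * D' ≤ t * D' := Nat.mul_le_mul_right D' h3
    have c1 : d ≤ t * D' := by rw [h1]; exact le_trans h2 h5
    have c2 : t * D' + t ≤ d := by
      have he : t * D' + t = t * D := by rw [hD']; ring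
      omega
    have c3 : d + t ≤ d := le_trans (Nat.add_le_add_right c1 t) c2
    omega
  obtain ⟨b, hb⟩ := hpig
  -- extract D elements in block b
  set γ := α.1.filter (fun x : Fin n => (x : ℕ) / L = b) with hγ
  have hcount : Multiset.count b β = Multiset.card γ := by
    rw [hβ, Multiset.count_map, hγ]
    congr 1
    apply Multiset.filter_congr
    intro x _
    constructor <;> (intro h; omega)
  have hcardγ : D ≤ Multiset.card γ := hcount ▸ hb
  set l := γ.toList with hl
  have hlen : D ≤ l.length := by
    rw [hl, Multiset.length_toList]; exact hcardγ
  refine ⟨⟨(l.take D : List (Fin n)), ?_⟩, ?_, b, ?_⟩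
  · simp [List.length_take, min_eq_left hlen]
  · have h1 : (↑(l.take D) : Multiset (Fin n)) ≤ ↑l :=
      (List.take_sublist D l).subperm
    have h2 : (↑l : Multiset (Fin n)) = γ := Multiset.coe_toList γ
    rw [h2] at h1
    exact le_trans h1 (Multiset.filter_le _ _)
  · intro x hx
    have h2 : (↑(l.take D) : Multiset (Fin n)) ≤ ↑l := (List.take_sublist D l).subperm
    have h3 := Multiset.mem_of_le h2 hx
    rw [hl, Multiset.coe_toList γ] at h3
    exact (Multiset.mem_filter.mp h3).2

end Covering

section Counting
variable {D d n : ℕ}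

lemma image_card_bound (hD : 2 ≤ D) (hdD : D ≤ d) (hdn : d ≤ n)
    (σ : Sym (Fin n) d → Sym (Fin n) D)
    (hσ : ∀ α, ∃ b : ℕ, ∀ x ∈ (σ α).1, (x : ℕ) / ((n + d / D - 1) / (d / D)) = b) :
    (Finset.image σ Finset.univ).card
      ≤ d / D * Nat.multichoose ((n + d / D - 1) / (d / D)) D := by
  set t := d / D with ht
  set L := (n + t - 1) / t with hL
  have hD0 : 0 < D := by omega
  have ht1 : 1 ≤ t := (Nat.one_le_div_iff hD0).mpr hdD
  have hn1 : 1 ≤ n := by omega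
  have hL1 : 1 ≤ L := (Nat.one_le_div_iff (by omega)).mpr (by omega)
  have hntL : n ≤ t * L := nat_le_mul_div_ceil (by omega)
  set dec : Fin t × Sym (Fin L) D → Sym (Fin n) D := fun p =>
    ⟨p.2.1.map (fun r : Fin L => (⟨min (p.1.1 * L + r.1) (n-1), by omega⟩ : Fin n)),
      by rw [Multiset.card_map]; exact p.2.2⟩ with hdec
  have hsurj : Set.SurjOn dec ↑(Finset.univ : Finset (Fin t × Sym (Fin L) D))
      ↑(Finset.image σ Finset.univ) := by
    intro s hs
    simp only [Finset.coe_image, Set.mem_image, Finset.mem_coe] at hs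
    obtain ⟨α, _, rfl⟩ := hs
    obtain ⟨b, hb⟩ := hσ α
    have hcard : Multiset.card (σ α).1 = D := (σ α).2
    have hne : (σ α).1 ≠ 0 := by
      intro h0; rw [h0] at hcard; simp at hcard; omega
    obtain ⟨x₀, hx₀⟩ := Multiset.exists_mem_of_ne_zero hne
    have hbt : b < t := by
      have h1 := hb x₀ hx₀
      have h2 : (x₀ : ℕ) < t * L := lt_of_lt_of_le x₀.2 hntL
      have h3 : (x₀ : ℕ) / L < t := Nat.div_lt_iff_lt_mul (by omega) |>.mpr (by omega)
      omega
    refine ⟨(⟨b, hbt⟩, ⟨(σ α).1.map (fun x : Fin n => (⟨(x : ℕ) % L, Nat.mod_lt _ (by omega)⟩ : Fin L)), by rw [Multiset.card_map]; exact hcard⟩), Finset.mem_coe.mpr (Finset.mem_univ _), ?_⟩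
    rw [hdec]
    apply Subtype.ext
    simp only [Multiset.map_map, Function.comp]
    calc Multiset.map (fun x : Fin n =>
            (⟨min (b * L + (x:ℕ) % L) (n-1), by omega⟩ : Fin n)) (σ α).1
        = Multiset.map id (σ α).1 := by
          apply Multiset.map_congr rfl
          intro x hx
          have h1 := hb x hx
          have h2 := Nat.div_add_mod (x : ℕ) L
          have h3 : (x : ℕ) < n := x.2
          have h4 : b * L = L * ((x:ℕ) / L) := by rw [← h1, mul_comm]
          apply Fin.ext
          simp only [id_eq]
          omega
    _ = (σ α).1 := Multiset.map_id _
  have hcard := Finset.card_le_card_of_surjOn dec hsurj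
  calc (Finset.image σ Finset.univ).card
      ≤ (Finset.univ : Finset (Fin t × Sym (Fin L) D)).card := hcard
  _ = t * Nat.multichoose L D := by
      rw [Finset.card_univ, Fintype.card_prod, Fintype.card_fin,
        Sym.card_sym_eq_multichoose, Fintype.card_fin]

lemma count_arith (hD : 2 ≤ D) (hdD : D ≤ d) (hdn : d ≤ n) (t L : ℕ)
    (ht1 : 1 ≤ t) (htd : t ≤ d) (hLt : L * t ≤ n + t - 1)
    (hDt : D * t ≤ d) (hd2Dt : d ≤ 2 * D * t) :
    2 * (t * Nat.multichoose L D) * d ^ (D - 1)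
      ≤ (6 * D) ^ (D + 1) * n ^ D := by
  have hn1 : 1 ≤ n := by omega
  have hkey : (L + D) * d ≤ 6 * D * n := by
    calc (L + D) * d ≤ (L + D) * (2 * D * t) := Nat.mul_le_mul_left _ hd2Dt
    _ = 2 * D * (L * t + D * t) := by ring
    _ ≤ 2 * D * ((n + t - 1) + d) := Nat.mul_le_mul_left _ (Nat.add_le_add hLt hDt)
    _ ≤ 2 * D * (3 * n) := Nat.mul_le_mul_left _ (by omega)
    _ = 6 * D * n := by ring
  have hmc : Nat.multichoose L D ≤ (L + D) ^ D := by
    rw [Nat.multichoose_eq]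
    calc (L + D - 1).choose D ≤ (L + D - 1) ^ D := Nat.choose_le_pow (L + D - 1) D
    _ ≤ (L + D) ^ D := Nat.pow_le_pow_left (by omega) D
  have hpowd : d ^ (D - 1) * d = d ^ D := by
    rw [← pow_succ]
    congr 1
    omega
  calc 2 * (t * Nat.multichoose L D) * d ^ (D - 1)
      ≤ 2 * (t * (L + D) ^ D) * d ^ (D - 1) :=
        Nat.mul_le_mul_right _ (Nat.mul_le_mul_left _ (Nat.mul_le_mul_left _ hmc))
  _ = 2 * (L + D) ^ D * (t * d ^ (D - 1)) := by ring
  _ ≤ 2 * (L + D) ^ D * (d * d ^ (D - 1)) :=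
        Nat.mul_le_mul_left _ (Nat.mul_le_mul_right _ htd)
  _ = 2 * ((L + D) ^ D * d ^ D) := by rw [mul_comm d _, hpowd]; ring
  _ = 2 * ((L + D) * d) ^ D := by rw [mul_pow]
  _ ≤ 2 * (6 * D * n) ^ D := Nat.mul_le_mul_left _ (Nat.pow_le_pow_left hkey D)
  _ = 2 * ((6 * D) ^ D * n ^ D) := by rw [mul_pow]
  _ ≤ (6 * D) * ((6 * D) ^ D * n ^ D) := Nat.mul_le_mul_right _ (by omega)
  _ = (6 * D) ^ (D + 1) * n ^ D := by rw [pow_succ]; ring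

lemma index_card_arith (hD : 2 ≤ D) (hdD : D ≤ d) (hdn : d ≤ n) :
    (Nat.multichoose n d + Nat.multichoose n (d - D)) * n ^ d ≤ n ^ (200 * d) := by
  have hn2 : 2 ≤ n := by omega
  have hd1 : 1 ≤ d := by omega
  have hmc : ∀ k, k ≤ d → Nat.multichoose n k ≤ 2 ^ d * n ^ d := by
    intro k hk
    rw [Nat.multichoose_eq]
    calc (n + k - 1).choose k ≤ (n + k - 1) ^ k := Nat.choose_le_pow (n + k - 1) k
    _ ≤ (2 * n) ^ k := Nat.pow_le_pow_left (by omega) k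
    _ ≤ (2 * n) ^ d := Nat.pow_le_pow_right (by omega) hk
    _ = 2 ^ d * n ^ d := mul_pow 2 n d
  have h2n : 2 ^ d ≤ n ^ d := Nat.pow_le_pow_left hn2 d
  have h2nd : 2 ≤ n ^ d := le_trans hn2 (Nat.le_self_pow (by omega) n)
  calc (Nat.multichoose n d + Nat.multichoose n (d - D)) * n ^ d
      ≤ (2 ^ d * n ^ d + 2 ^ d * n ^ d) * n ^ d :=
        Nat.mul_le_mul_right _ (Nat.add_le_add (hmc d le_rfl) (hmc (d - D) (by omega)))
  _ = 2 * 2 ^ d * n ^ d * n ^ d := by ring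
  _ ≤ n ^ d * n ^ d * n ^ d * n ^ d := by
        refine Nat.mul_le_mul_right _ ?_
        exact Nat.mul_le_mul_right _ (Nat.mul_le_mul h2nd h2n)
  _ = n ^ (4 * d) := by rw [← pow_add, ← pow_add, ← pow_add]; congr 1; ring
  _ ≤ n ^ (200 * d) := Nat.pow_le_pow_right (by omega) (by omega)

end Counting
section Core
open MvPolynomial

variable {D d n m : ℕ}

/-- index type for rows/columns of the certificate matrix -/
abbrev ISym (D d n : ℕ) := Sym (Fin n) d ⊕ Sym (Fin n) (d - D)

noncomputable def ind' : ISym D d n → (Fin n →₀ ℕ) := Sum.elim symExp symExp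

def Simg (σ : Sym (Fin n) d → Sym (Fin n) D) : Finset (Sym (Fin n) D) :=
  Finset.image σ Finset.univ

lemma mem_Simg (σ : Sym (Fin n) d → Sym (Fin n) D) (α : Sym (Fin n) d) : σ α ∈ Simg σ :=
  Finset.mem_image_of_mem σ (Finset.mem_univ α)

noncomputable def wgt (σ : Sym (Fin n) d → Sym (Fin n) D)
    (emb : (↥(Simg σ) × Bool) ↪ Fin m) (s₀ : ↥(Simg σ)) :
    ISym D d n → Fin m → ℚ
  | Sum.inl α => fun i =>
      if i = emb (⟨σ α, mem_Simg σ α⟩, false) then 2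
      else if i = emb (⟨σ α, mem_Simg σ α⟩, true) then -1
      else 0
  | Sum.inr _ => fun i =>
      if i = emb (s₀, false) then 1 else if i = emb (s₀, true) then -1 else 0

noncomputable def vexp (σ : Sym (Fin n) d → Sym (Fin n) D) : ISym D d n → (Fin n →₀ ℕ)
  | Sum.inl α => Multiset.toFinsupp (α.1 - (σ α).1)
  | Sum.inr γ => symExp γ

noncomputable def vcol (σ : Sym (Fin n) d → Sym (Fin n) D)
    (emb : (↥(Simg σ) × Bool) ↪ Fin m) (s₀ : ↥(Simg σ)) (j : ISym D d n) (i : Fin m) :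
    MvPolynomial (Fin n) ℚ :=
  monomial (vexp σ j) (wgt σ emb s₀ j i)

noncomputable def Gpol (ω : (Fin m × Sym (Fin n) D) ⊕ Fin m → ℚ) (i : Fin m) :
    MvPolynomial (Fin n) ℚ :=
  ∑ s : Sym (Fin n) D, C (ω (Sum.inl (i, s))) * symMonomial s

noncomputable def Thet (σ : Sym (Fin n) d → Sym (Fin n) D)
    (emb : (↥(Simg σ) × Bool) ↪ Fin m) (s₀ : ↥(Simg σ))
    (ω : (Fin m × Sym (Fin n) D) ⊕ Fin m → ℚ) (j : ISym D d n) :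
    MvPolynomial (Fin n) ℚ :=
  ∑ i : Fin m, vcol σ emb s₀ j i * (Gpol ω i - C (ω (Sum.inr i)))

noncomputable def Mmat (σ : Sym (Fin n) d → Sym (Fin n) D)
    (emb : (↥(Simg σ) × Bool) ↪ Fin m) (s₀ : ↥(Simg σ))
    (ω : (Fin m × Sym (Fin n) D) ⊕ Fin m → ℚ) :
    Matrix (ISym D d n) (ISym D d n) ℚ :=
  Matrix.of fun t j => coeff (ind' t) (Thet σ emb s₀ ω j)

section Lemmas
variable {σ : Sym (Fin n) d → Sym (Fin n) D}

lemma vexp_degree (hdD : D ≤ d) (hσle : ∀ α, (σ α).1 ≤ α.1)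
    (j : ISym D d n) : (vexp σ j).degree = d - D := by
  cases j with
  | inl α =>
    have h1 : (α.1 - (σ α).1) + (σ α).1 = α.1 := tsub_add_cancel_of_le (hσle α)
    have h2 : Multiset.card (α.1 - (σ α).1) + D = d := by
      have := congrArg Multiset.card h1
      rw [Multiset.card_add, (σ α).2, α.2] at this
      omega
    simp only [vexp, degree_toFinsupp]
    omega
  | inr γ => simp only [vexp, degree_symExp]

lemma ind'_degree : ∀ j : ISym D d n,
    (ind' j).degree = if j.isLeft then d else d - D
  | Sum.inl α => by simp [ind', degree_symExp]
  | Sum.inr γ => by simp [ind', degree_symExp]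

lemma ind'_inj (hD : 2 ≤ D) (hdD : D ≤ d) :
    Function.Injective (ind' : ISym D d n → _) := by
  intro a b hab
  have hDd : d - D < d := by omega
  cases a with
  | inl α => cases b with
    | inl β => simp only [ind'] at hab; exact congrArg Sum.inl (symExp_injective hab)
    | inr γ =>
      exfalso
      have h1 := congrArg Finsupp.degree hab
      rw [show (ind' (Sum.inl α)).degree = d from by simp [ind', degree_symExp],
        show (ind' (Sum.inr γ) : Fin n →₀ ℕ).degree = d - D from by simp [ind', degree_symExp]] at h1
      omega
  | inr γ => cases b with
    | inl β =>
      exfalso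
      have h1 := congrArg Finsupp.degree hab
      rw [show (ind' (Sum.inr γ) : Fin n →₀ ℕ).degree = d - D from by simp [ind', degree_symExp],
        show (ind' (Sum.inl β)).degree = d from by simp [ind', degree_symExp]] at h1
      omega
    | inr γ' => simp only [ind'] at hab; exact congrArg Sum.inr (symExp_injective hab)

lemma Gpol_homog (ω : (Fin m × Sym (Fin n) D) ⊕ Fin m → ℚ) (i : Fin m) :
    (Gpol ω i).IsHomogeneous D := by
  apply MvPolynomial.IsHomogeneous.sum
  intro s _
  have h1 : (symMonomial s : MvPolynomial (Fin n) ℚ).IsHomogeneous D := by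
    rw [symMonomial_eq]
    exact isHomogeneous_monomial 1 (degree_symExp s)
  simpa using (isHomogeneous_C (Fin n) (ω (Sum.inl (i, s)))).mul h1

lemma vcol_homog (hdD : D ≤ d) (hσle : ∀ α, (σ α).1 ≤ α.1)
    (emb : (↥(Simg σ) × Bool) ↪ Fin m) (s₀ : ↥(Simg σ)) (j : ISym D d n) (i : Fin m) :
    (vcol σ emb s₀ j i).IsHomogeneous (d - D) :=
  isHomogeneous_monomial _ (vexp_degree hdD hσle j)

end Lemmas
end Core
section Core2
open MvPolynomial

variable {D d n m : ℕ}
variable {σ : Sym (Fin n) d → Sym (Fin n) D}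

lemma Thet_recon (hD : 2 ≤ D) (hdD : D ≤ d) (hσle : ∀ α, (σ α).1 ≤ α.1)
    (emb : (↥(Simg σ) × Bool) ↪ Fin m) (s₀ : ↥(Simg σ))
    (ω : (Fin m × Sym (Fin n) D) ⊕ Fin m → ℚ) (j : ISym D d n) :
    Thet σ emb s₀ ω j
      = ∑ t : ISym D d n, Mmat σ emb s₀ ω t j • monomial (ind' t) (1 : ℚ) := by
  classical
  set P1 : MvPolynomial (Fin n) ℚ := ∑ i : Fin m, vcol σ emb s₀ j i * Gpol ω i with hP1
  set P2 : MvPolynomial (Fin n) ℚ :=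
    ∑ i : Fin m, vcol σ emb s₀ j i * C (ω (Sum.inr i)) with hP2
  have hsplit : Thet σ emb s₀ ω j = P1 - P2 := by
    rw [hP1, hP2, Thet, ← Finset.sum_sub_distrib]
    apply Finset.sum_congr rfl
    intro i _
    rw [mul_sub]
  have hP1h : P1.IsHomogeneous d := by
    rw [hP1]
    apply MvPolynomial.IsHomogeneous.sum
    intro i _
    have := (vcol_homog hdD hσle emb s₀ j i).mul (Gpol_homog ω i)
    rwa [Nat.sub_add_cancel hdD] at this
  have hP2h : P2.IsHomogeneous (d - D) := by
    rw [hP2]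
    apply MvPolynomial.IsHomogeneous.sum
    intro i _
    have := (vcol_homog hdD hσle emb s₀ j i).mul (isHomogeneous_C (Fin n) (ω (Sum.inr i)))
    rwa [Nat.add_zero] at this
  have hDd : d - D ≠ d := by omega
  rw [Fintype.sum_sum_type]
  have hL : ∀ β : Sym (Fin n) d,
      Mmat σ emb s₀ ω (Sum.inl β) j = coeff (symExp β) P1 := by
    intro β
    have h2 : coeff (symExp β) P2 = 0 :=
      hP2h.coeff_eq_zero (by rw [degree_symExp]; omega)
    rw [Mmat]
    show coeff (ind' (Sum.inl β)) (Thet σ emb s₀ ω j) = _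
    rw [hsplit]
    show coeff (symExp β) (P1 - P2) = _
    rw [MvPolynomial.coeff_sub, h2, sub_zero]
  have hR : ∀ γ : Sym (Fin n) (d - D),
      Mmat σ emb s₀ ω (Sum.inr γ) j = -coeff (symExp γ) P2 := by
    intro γ
    have h1 : coeff (symExp γ) P1 = 0 :=
      hP1h.coeff_eq_zero (by rw [degree_symExp]; omega)
    rw [Mmat]
    show coeff (ind' (Sum.inr γ)) (Thet σ emb s₀ ω j) = _
    rw [hsplit]
    show coeff (symExp γ) (P1 - P2) = _
    rw [MvPolynomial.coeff_sub, h1, zero_sub]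
  calc Thet σ emb s₀ ω j = P1 - P2 := hsplit
  _ = (∑ β : Sym (Fin n) d, coeff (symExp β) P1 • monomial (symExp β) (1:ℚ))
      + (∑ γ : Sym (Fin n) (d-D), (-coeff (symExp γ) P2) • monomial (symExp γ) (1:ℚ)) := by
      rw [← homog_expand P1 hP1h]
      have : (∑ γ : Sym (Fin n) (d-D), (-coeff (symExp γ) P2) • monomial (symExp γ) (1:ℚ))
          = -P2 := by
        rw [show -P2 = ∑ γ : Sym (Fin n) (d-D),
              coeff (symExp γ) (-P2) • monomial (symExp γ) (1:ℚ) from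
            homog_expand (-P2) hP2h.neg]
        apply Finset.sum_congr rfl
        intro γ _
        rw [MvPolynomial.coeff_neg]
      rw [this, sub_eq_add_neg]
  _ = (∑ β : Sym (Fin n) d, Mmat σ emb s₀ ω (Sum.inl β) j • monomial (ind' (Sum.inl β)) (1:ℚ))
      + (∑ γ : Sym (Fin n) (d-D), Mmat σ emb s₀ ω (Sum.inr γ) j • monomial (ind' (Sum.inr γ)) (1:ℚ)) := by
      refine congrArg₂ (· + ·) ?_ ?_
      · apply Finset.sum_congr rfl; intro β _; rw [hL β]; rfl
      · apply Finset.sum_congr rfl; intro γ _; rw [hR γ]; rfl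

lemma cert_to_rep (hD : 2 ≤ D) (hdD : D ≤ d) (hσle : ∀ α, (σ α).1 ≤ α.1)
    (emb : (↥(Simg σ) × Bool) ↪ Fin m) (s₀ : ↥(Simg σ))
    (ω : (Fin m × Sym (Fin n) D) ⊕ Fin m → ℚ)
    (hdet : (Mmat σ emb s₀ ω).det ≠ 0)
    (f : MvPolynomial (Fin n) ℚ) (hf : f.IsHomogeneous d) :
    ∃ a : Fin m → MvPolynomial (Fin n) ℚ,
      (∀ i, (a i).totalDegree ≤ d - D) ∧
      (∑ i : Fin m, a i * ((∑ s : Sym (Fin n) D,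
          C (ω (Sum.inl (i, s))) * symMonomial s) - C (ω (Sum.inr i))) = f) := by
  classical
  set coords : ISym D d n → ℚ := fun t => coeff (ind' t) f with hcoords
  set c : ISym D d n → ℚ := (Mmat σ emb s₀ ω)⁻¹.mulVec coords with hc
  have hMc : (Mmat σ emb s₀ ω).mulVec c = coords := by
    rw [hc, Matrix.mulVec_mulVec, Matrix.mul_nonsing_inv _ (isUnit_iff_ne_zero.mpr hdet),
      Matrix.one_mulVec]
  refine ⟨fun i => ∑ j : ISym D d n, c j • vcol σ emb s₀ j i, ?_, ?_⟩
  · intro i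
    refine le_trans (MvPolynomial.totalDegree_finset_sum _ _) ?_
    apply Finset.sup_le
    intro j _
    refine le_trans (MvPolynomial.totalDegree_smul_le _ _) ?_
    refine le_trans (MvPolynomial.totalDegree_monomial_le _ _) ?_
    have : ((vexp σ j).sum fun _x => id) = (vexp σ j).degree := rfl
    rw [this, vexp_degree hdD hσle j]
  · have hstep1 : ∀ i : Fin m,
        (∑ j : ISym D d n, c j • vcol σ emb s₀ j i) *
            ((∑ s : Sym (Fin n) D, C (ω (Sum.inl (i, s))) * symMonomial s)
              - C (ω (Sum.inr i)))
          = ∑ j : ISym D d n, c j • (vcol σ emb s₀ j i * (Gpol ω i - C (ω (Sum.inr i)))) := by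
      intro i
      rw [Finset.sum_mul]
      apply Finset.sum_congr rfl
      intro j _
      rw [smul_mul_assoc]
      rfl
    calc ∑ i : Fin m, (∑ j : ISym D d n, c j • vcol σ emb s₀ j i) *
            ((∑ s : Sym (Fin n) D, C (ω (Sum.inl (i, s))) * symMonomial s)
              - C (ω (Sum.inr i)))
        = ∑ i : Fin m, ∑ j : ISym D d n,
            c j • (vcol σ emb s₀ j i * (Gpol ω i - C (ω (Sum.inr i)))) :=
          Finset.sum_congr rfl fun i _ => hstep1 i
    _ = ∑ j : ISym D d n, c j • Thet σ emb s₀ ω j := by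
        rw [Finset.sum_comm]
        apply Finset.sum_congr rfl
        intro j _
        rw [Thet, Finset.smul_sum]
    _ = ∑ j : ISym D d n, c j •
          ∑ t : ISym D d n, Mmat σ emb s₀ ω t j • monomial (ind' t) (1:ℚ) := by
        apply Finset.sum_congr rfl
        intro j _
        rw [Thet_recon hD hdD hσle emb s₀ ω j]
    _ = ∑ t : ISym D d n, ((Mmat σ emb s₀ ω).mulVec c t) • monomial (ind' t) (1:ℚ) := by
        have hsw : ∀ j, c j • ∑ t : ISym D d n, Mmat σ emb s₀ ω t j • monomial (ind' t) (1:ℚ)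
            = ∑ t : ISym D d n, (Mmat σ emb s₀ ω t j * c j) • monomial (ind' t) (1:ℚ) := by
          intro j
          rw [Finset.smul_sum]
          exact Finset.sum_congr rfl fun t _ => by rw [smul_smul, mul_comm]
        rw [Finset.sum_congr rfl fun j _ => hsw j, Finset.sum_comm]
        apply Finset.sum_congr rfl
        intro t _
        rw [Matrix.mulVec, dotProduct, Finset.sum_smul]
    _ = ∑ t : ISym D d n, coords t • monomial (ind' t) (1:ℚ) := by rw [hMc]
    _ = f := by
        rw [Fintype.sum_sum_type]
        have hinr : ∀ γ : Sym (Fin n) (d - D),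
            coords (Sum.inr γ) • monomial (ind' (Sum.inr γ)) (1:ℚ) = 0 := by
          intro γ
          have : coords (Sum.inr γ) = 0 := by
            rw [hcoords]
            exact hf.coeff_eq_zero (by
              show (ind' (Sum.inr γ) : Fin n →₀ ℕ).degree ≠ d
              show (symExp γ).degree ≠ d
              rw [degree_symExp]; omega)
          rw [this, zero_smul]
        rw [Finset.sum_eq_zero (fun γ _ => hinr γ), add_zero]
        exact (homog_expand f hf).symm
section Core3
open MvPolynomial

variable {D d n m : ℕ}
variable {σ : Sym (Fin n) d → Sym (Fin n) D}

noncomputable def Mpoly (σ : Sym (Fin n) d → Sym (Fin n) D)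
    (emb : (↥(Simg σ) × Bool) ↪ Fin m) (s₀ : ↥(Simg σ)) :
    Matrix (ISym D d n) (ISym D d n) (MvPolynomial ((Fin m × Sym (Fin n) D) ⊕ Fin m) ℚ) :=
  Matrix.of fun t j =>
    (∑ i : Fin m, ∑ s : Sym (Fin n) D,
      C (coeff (ind' t) (vcol σ emb s₀ j i * monomial (symExp s) (1:ℚ)))
        * X (Sum.inl (i, s)))
    - ∑ i : Fin m, C (coeff (ind' t) (vcol σ emb s₀ j i)) * X (Sum.inr i)

lemma Mpoly_eval (emb : (↥(Simg σ) × Bool) ↪ Fin m) (s₀ : ↥(Simg σ))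
    (ω : (Fin m × Sym (Fin n) D) ⊕ Fin m → ℚ) (t j : ISym D d n) :
    eval ω (Mpoly σ emb s₀ t j) = Mmat σ emb s₀ ω t j := by
  classical
  have hL : eval ω (Mpoly σ emb s₀ t j)
      = (∑ i : Fin m, ∑ s : Sym (Fin n) D,
          coeff (ind' t) (vcol σ emb s₀ j i * monomial (symExp s) (1:ℚ)) * ω (Sum.inl (i, s)))
        - ∑ i : Fin m, coeff (ind' t) (vcol σ emb s₀ j i) * ω (Sum.inr i) := by
    rw [Mpoly]
    simp only [Matrix.of_apply, map_sub, map_sum, eval_mul, eval_C, eval_X]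
  rw [hL, Mmat]
  show _ = coeff (ind' t) (Thet σ emb s₀ ω j)
  rw [Thet]
  have hterm : ∀ i : Fin m,
      coeff (ind' t) (vcol σ emb s₀ j i * (Gpol ω i - C (ω (Sum.inr i))))
        = (∑ s : Sym (Fin n) D,
            coeff (ind' t) (vcol σ emb s₀ j i * monomial (symExp s) (1:ℚ)) * ω (Sum.inl (i, s)))
          - coeff (ind' t) (vcol σ emb s₀ j i) * ω (Sum.inr i) := by
    intro i
    rw [mul_sub, MvPolynomial.coeff_sub]
    congr 1
    · rw [Gpol, Finset.mul_sum, MvPolynomial.coeff_sum]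
      apply Finset.sum_congr rfl
      intro s _
      rw [symMonomial_eq, mul_left_comm, coeff_C_mul, mul_comm]
    · rw [mul_comm _ (C (ω (Sum.inr i))), coeff_C_mul, mul_comm]
  rw [MvPolynomial.coeff_sum]
  rw [Finset.sum_congr rfl fun i _ => hterm i, Finset.sum_sub_distrib]

lemma Mpoly_totalDegree (emb : (↥(Simg σ) × Bool) ↪ Fin m) (s₀ : ↥(Simg σ))
    (t j : ISym D d n) : (Mpoly σ emb s₀ t j).totalDegree ≤ 1 := by
  classical
  rw [Mpoly, Matrix.of_apply, sub_eq_add_neg]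
  refine le_trans (MvPolynomial.totalDegree_add _ _) ?_
  rw [max_le_iff]
  constructor
  · refine le_trans (MvPolynomial.totalDegree_finset_sum _ _) ?_
    apply Finset.sup_le
    intro i _
    refine le_trans (MvPolynomial.totalDegree_finset_sum _ _) ?_
    apply Finset.sup_le
    intro s _
    refine le_trans (MvPolynomial.totalDegree_mul _ _) ?_
    rw [MvPolynomial.totalDegree_C, MvPolynomial.totalDegree_X]
  · rw [MvPolynomial.totalDegree_neg]
    refine le_trans (MvPolynomial.totalDegree_finset_sum _ _) ?_
    apply Finset.sup_le
    intro i _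
    refine le_trans (MvPolynomial.totalDegree_mul _ _) ?_
    rw [MvPolynomial.totalDegree_C, MvPolynomial.totalDegree_X]

lemma Mpoly_det_eval (emb : (↥(Simg σ) × Bool) ↪ Fin m) (s₀ : ↥(Simg σ))
    (ω : (Fin m × Sym (Fin n) D) ⊕ Fin m → ℚ) :
    eval ω (Mpoly σ emb s₀).det = (Mmat σ emb s₀ ω).det := by
  classical
  have h1 := RingHom.map_det (MvPolynomial.eval ω :
    MvPolynomial ((Fin m × Sym (Fin n) D) ⊕ Fin m) ℚ →+* ℚ) (Mpoly σ emb s₀)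
  rw [h1]
  congr 1
  ext t j
  exact Mpoly_eval emb s₀ ω t j

lemma Mpoly_det_totalDegree (emb : (↥(Simg σ) × Bool) ↪ Fin m) (s₀ : ↥(Simg σ)) :
    (Mpoly σ emb s₀).det.totalDegree ≤ Fintype.card (ISym D d n) := by
  classical
  rw [Matrix.det_apply]
  refine le_trans (MvPolynomial.totalDegree_finset_sum _ _) ?_
  apply Finset.sup_le
  intro π _
  have hsmul : (Equiv.Perm.sign π • ∏ i : ISym D d n, Mpoly σ emb s₀ (π i) i).totalDegree
      ≤ (∏ i : ISym D d n, Mpoly σ emb s₀ (π i) i).totalDegree := by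
    rcases Int.units_eq_one_or (Equiv.Perm.sign π) with h | h
    · rw [h, one_smul]
    · rw [h]
      have : (-1 : ℤˣ) • (∏ i : ISym D d n, Mpoly σ emb s₀ (π i) i)
          = -(∏ i : ISym D d n, Mpoly σ emb s₀ (π i) i) := by
        simp
      rw [this, MvPolynomial.totalDegree_neg]
  refine le_trans hsmul ?_
  refine le_trans (MvPolynomial.totalDegree_finset_prod _ _) ?_
  calc ∑ i : ISym D d n, (Mpoly σ emb s₀ (π i) i).totalDegree
      ≤ ∑ _i : ISym D d n, 1 :=
        Finset.sum_le_sum fun i _ => Mpoly_totalDegree emb s₀ (π i) i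
  _ = Fintype.card (ISym D d n) := by simp

end Core3
section Core4
open MvPolynomial

variable {D d n m : ℕ}
variable {σ : Sym (Fin n) d → Sym (Fin n) D}

open Classical in
noncomputable def wit (σ : Sym (Fin n) d → Sym (Fin n) D)
    (emb : (↥(Simg σ) × Bool) ↪ Fin m) :
    (Fin m × Sym (Fin n) D) ⊕ Fin m → ℚ
  | Sum.inl (i, s) =>
      if ∃ p : ↥(Simg σ) × Bool, emb p = i ∧ (p.1 : Sym (Fin n) D) = s then 1 else 0
  | Sum.inr i =>
      if ∃ p : ↥(Simg σ) × Bool, emb p = i ∧ p.2 = true then 2 else 1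

lemma wit_G (emb : (↥(Simg σ) × Bool) ↪ Fin m) (p : ↥(Simg σ) × Bool) :
    Gpol (wit σ emb) (emb p) = monomial (symExp (p.1 : Sym (Fin n) D)) (1:ℚ) := by
  classical
  rw [Gpol]
  rw [Finset.sum_eq_single (p.1 : Sym (Fin n) D)]
  · have hc : wit σ emb (Sum.inl (emb p, (p.1 : Sym (Fin n) D))) = 1 := by
      rw [wit]
      exact if_pos ⟨p, rfl, rfl⟩
    rw [hc, map_one, one_mul, symMonomial_eq]
  · intro s _ hs
    have hc : wit σ emb (Sum.inl (emb p, s)) = 0 := by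
      rw [wit]
      apply if_neg
      rintro ⟨q, hq1, hq2⟩
      exact hs (by rw [← hq2, emb.injective hq1])
    rw [hc, map_zero, zero_mul]
  · intro h
    exact absurd (Finset.mem_univ _) h

lemma wit_b_false (emb : (↥(Simg σ) × Bool) ↪ Fin m) (q : ↥(Simg σ)) :
    wit σ emb (Sum.inr (emb (q, false))) = 1 := by
  classical
  rw [wit]
  apply if_neg
  rintro ⟨p, hp1, hp2⟩
  have := emb.injective hp1
  rw [this] at hp2
  simp at hp2

lemma wit_b_true (emb : (↥(Simg σ) × Bool) ↪ Fin m) (q : ↥(Simg σ)) :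
    wit σ emb (Sum.inr (emb (q, true))) = 2 := by
  classical
  rw [wit]
  exact if_pos ⟨(q, true), rfl, rfl⟩

lemma pair_sum {β : Type*} [AddCommMonoid β] (i₁ i₂ : Fin m) (hne : i₁ ≠ i₂)
    (F : Fin m → β) (hF : ∀ i, i ≠ i₁ → i ≠ i₂ → F i = 0) :
    ∑ i : Fin m, F i = F i₁ + F i₂ := by
  classical
  rw [← Finset.sum_pair hne]
  symm
  apply Finset.sum_subset (Finset.subset_univ _)
  intro x _ hx
  simp only [Finset.mem_insert, Finset.mem_singleton] at hx
  push_neg at hx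
  exact hF x hx.1 hx.2

lemma wit_Thet (hσle : ∀ α, (σ α).1 ≤ α.1)
    (emb : (↥(Simg σ) × Bool) ↪ Fin m) (s₀ : ↥(Simg σ)) (j : ISym D d n) :
    Thet σ emb s₀ (wit σ emb) j = monomial (ind' j) (1:ℚ) := by
  classical
  have hC2 : (C 2 : MvPolynomial (Fin n) ℚ) = 2 := map_ofNat _ 2
  have hC1 : (C 1 : MvPolynomial (Fin n) ℚ) = 1 := C_1
  have hCm1 : (C (-1:ℚ) : MvPolynomial (Fin n) ℚ) = -1 := by
    rw [show (-1:ℚ) = -(1:ℚ) from rfl, map_neg, C_1]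
  cases j with
  | inl α =>
    have hne : emb (⟨σ α, mem_Simg σ α⟩, false) ≠ emb (⟨σ α, mem_Simg σ α⟩, true) := by
      intro h
      have := emb.injective h
      simp at this
    have hw1 : wgt σ emb s₀ (Sum.inl α) (emb (⟨σ α, mem_Simg σ α⟩, false)) = 2 := by
      simp [wgt]
    have hw2 : wgt σ emb s₀ (Sum.inl α) (emb (⟨σ α, mem_Simg σ α⟩, true)) = -1 := by
      simp [wgt, Ne.symm hne]
    have hzero : ∀ i, i ≠ emb (⟨σ α, mem_Simg σ α⟩, false)
        → i ≠ emb (⟨σ α, mem_Simg σ α⟩, true) →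
        vcol σ emb s₀ (Sum.inl α) i * (Gpol (wit σ emb) i - C (wit σ emb (Sum.inr i))) = 0 := by
      intro i h1 h2
      have hw : wgt σ emb s₀ (Sum.inl α) i = 0 := by
        simp [wgt, h1, h2]
      rw [vcol, hw, map_zero, zero_mul]
    rw [Thet, pair_sum _ _ hne _ hzero]
    rw [vcol, vcol, hw1, hw2,
      wit_G emb (⟨σ α, mem_Simg σ α⟩, false), wit_G emb (⟨σ α, mem_Simg σ α⟩, true),
      wit_b_false emb ⟨σ α, mem_Simg σ α⟩, wit_b_true emb ⟨σ α, mem_Simg σ α⟩]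
    have hsum : vexp σ (Sum.inl α) + symExp (σ α) = ind' (D := D) (Sum.inl α) := by
      show Multiset.toFinsupp (α.1 - (σ α).1) + Multiset.toFinsupp (σ α).1
        = Multiset.toFinsupp α.1
      rw [← map_add, tsub_add_cancel_of_le (hσle α)]
    have e1 : monomial (vexp σ (Sum.inl α)) (2:ℚ)
        = C 2 * monomial (vexp σ (Sum.inl α)) (1:ℚ) := by
      rw [C_mul_monomial, mul_one]
    have e2 : monomial (vexp σ (Sum.inl α)) (-1:ℚ)
        = C (-1) * monomial (vexp σ (Sum.inl α)) (1:ℚ) := by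
      rw [C_mul_monomial, mul_one]
    have hAB : monomial (vexp σ (Sum.inl α)) (1:ℚ)
          * monomial (symExp ((⟨σ α, mem_Simg σ α⟩ : ↥(Simg σ)) : Sym (Fin n) D)) (1:ℚ)
        = monomial (ind' (D := D) (Sum.inl α)) (1:ℚ) := by
      rw [monomial_mul, one_mul]
      exact congrArg (fun e => monomial e (1:ℚ)) hsum
    rw [e1, e2, ← hAB, hCm1, hC1, hC2]
    ring
  | inr γ =>
    have hne : emb (s₀, false) ≠ emb (s₀, true) := by
      intro h
      have := emb.injective h
      simp at this
    have hw1 : wgt σ emb s₀ (Sum.inr γ) (emb (s₀, false)) = 1 := by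
      simp [wgt]
    have hw2 : wgt σ emb s₀ (Sum.inr γ) (emb (s₀, true)) = -1 := by
      simp [wgt, Ne.symm hne]
    have hzero : ∀ i, i ≠ emb (s₀, false) → i ≠ emb (s₀, true) →
        vcol σ emb s₀ (Sum.inr γ) i * (Gpol (wit σ emb) i - C (wit σ emb (Sum.inr i))) = 0 := by
      intro i h1 h2
      have hw : wgt σ emb s₀ (Sum.inr γ) i = 0 := by
        simp [wgt, h1, h2]
      rw [vcol, hw, map_zero, zero_mul]
    rw [Thet, pair_sum _ _ hne _ hzero]
    rw [vcol, vcol, hw1, hw2,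
      wit_G emb (s₀, false), wit_G emb (s₀, true),
      wit_b_false emb s₀, wit_b_true emb s₀]
    have e2 : monomial (vexp σ (Sum.inr γ)) (-1:ℚ)
        = C (-1) * monomial (vexp σ (Sum.inr γ)) (1:ℚ) := by
      rw [C_mul_monomial, mul_one]
    have hAeq : monomial (vexp σ (Sum.inr γ)) (1:ℚ) = monomial (ind' (D := D) (d := d) (Sum.inr γ)) (1:ℚ) := rfl
    rw [e2, hAeq, hCm1, hC1, hC2]
    ring

lemma wit_Mmat (hD : 2 ≤ D) (hdD : D ≤ d) (hσle : ∀ α, (σ α).1 ≤ α.1)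
    (emb : (↥(Simg σ) × Bool) ↪ Fin m) (s₀ : ↥(Simg σ)) :
    Mmat σ emb s₀ (wit σ emb) = 1 := by
  classical
  ext t j
  rw [Mmat, Matrix.of_apply, wit_Thet hσle emb s₀ j, coeff_monomial, Matrix.one_apply]
  by_cases h : t = j
  · rw [if_pos h, if_pos (by rw [h])]
  · rw [if_neg h, if_neg (fun he => h ((ind'_inj hD hdD he).symm))]

end Core4
section Cert
open MvPolynomial

lemma exists_certificate {D d n m : ℕ} (hD : 2 ≤ D) (hdD : D ≤ d) (hdn : d ≤ n)
    (hm : 2 * (d / D * Nat.multichoose ((n + d / D - 1) / (d / D)) D) ≤ m) :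
    ∃ P : MvPolynomial ((Fin m × Sym (Fin n) D) ⊕ Fin m) ℚ, P ≠ 0 ∧
      P.totalDegree ≤ Nat.multichoose n d + Nat.multichoose n (d - D) ∧
      ∀ ω : (Fin m × Sym (Fin n) D) ⊕ Fin m → ℚ, eval ω P ≠ 0 →
        ∀ f : MvPolynomial (Fin n) ℚ, f.IsHomogeneous d →
          ∃ a : Fin m → MvPolynomial (Fin n) ℚ,
            (∀ i, (a i).totalDegree ≤ d - D) ∧
            (∑ i : Fin m, a i * ((∑ s : Sym (Fin n) D, C (ω (Sum.inl (i, s))) * symMonomial s)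
              - C (ω (Sum.inr i))) = f) := by
  classical
  set σ : Sym (Fin n) d → Sym (Fin n) D :=
    fun α => (covering_exists hD hdD hdn α).choose with hσ
  have hσle : ∀ α, (σ α).1 ≤ α.1 := fun α => (covering_exists hD hdD hdn α).choose_spec.1
  have hσblk : ∀ α, ∃ b : ℕ, ∀ x ∈ (σ α).1, (x:ℕ) / ((n + d / D - 1)/(d / D)) = b :=
    fun α => (covering_exists hD hdD hdn α).choose_spec.2
  have hcard : Fintype.card (↥(Simg σ) × Bool) ≤ Fintype.card (Fin m) := by
    rw [Fintype.card_prod, Fintype.card_coe, Fintype.card_bool, Fintype.card_fin]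
    have h1 := image_card_bound hD hdD hdn σ hσblk
    calc (Simg σ).card * 2
        ≤ (d / D * Nat.multichoose ((n + d / D - 1) / (d / D)) D) * 2 :=
          Nat.mul_le_mul_right 2 h1
    _ = 2 * (d / D * Nat.multichoose ((n + d / D - 1) / (d / D)) D) := by ring
    _ ≤ m := hm
  obtain ⟨emb⟩ := Function.Embedding.nonempty_of_card_le hcard
  have hx0 : Nonempty (Fin n) := ⟨⟨0, by omega⟩⟩
  obtain ⟨x0⟩ := hx0
  set α₀ : Sym (Fin n) d := Sym.replicate d x0 with hα₀
  set s₀ : ↥(Simg σ) := ⟨σ α₀, mem_Simg σ α₀⟩ with hs₀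
  refine ⟨(Mpoly σ emb s₀).det, ?_, ?_, ?_⟩
  · intro h0
    have h1 := Mpoly_det_eval emb s₀ (wit σ emb)
    rw [h0, map_zero, wit_Mmat hD hdD hσle emb s₀, Matrix.det_one] at h1
    exact one_ne_zero h1.symm
  · refine le_trans (Mpoly_det_totalDegree emb s₀) ?_
    have hcardI : Fintype.card (ISym D d n)
        = Nat.multichoose n d + Nat.multichoose n (d - D) := by
      rw [Fintype.card_sum, Sym.card_sym_eq_multichoose, Sym.card_sym_eq_multichoose,
        Fintype.card_fin]
    rw [hcardI]
  · intro ω hev f hf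
    apply cert_to_rep hD hdD hσle emb s₀ ω _ f hf
    intro h0
    rw [← Mpoly_det_eval emb s₀ ω] at h0
    exact hev h0

end Cert
lemma schwartz_zippel {ι : Type} [Fintype ι] (μ : ι → Measure ℚ)
    (hprob : ∀ i, IsProbabilityMeasure (μ i)) (ε : ℝ≥0∞) (hε : ∀ i r, μ i {r} ≤ ε)
    (Q : MvPolynomial ι ℚ) (hQ : Q ≠ 0)
    (hSZfin : ∀ (N : ℕ) (μ : Fin N → Measure ℚ),
      (∀ i, IsProbabilityMeasure (μ i)) →
      ∀ (ε : ℝ≥0∞), (∀ i r, μ i {r} ≤ ε) →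
      ∀ Q : MvPolynomial (Fin N) ℚ, Q ≠ 0 →
      Measure.pi μ {x | MvPolynomial.eval x Q = 0} ≤ Q.totalDegree * ε) :
    Measure.pi μ {x | MvPolynomial.eval x Q = 0} ≤ Q.totalDegree * ε := by
  haveI := hprob
  set e : Fin (Fintype.card ι) ≃ ι := (Fintype.equivFin ι).symm with he
  have mp := measurePreserving_piCongrLeft μ e
  set Q' := MvPolynomial.rename e.symm Q with hQ'def
  have hQ' : Q' ≠ 0 := by
    intro h
    exact hQ ((MvPolynomial.rename_injective _ e.symm.injective)
      (by simpa [hQ'def] using h))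
  have hpre : (⇑(MeasurableEquiv.piCongrLeft (fun _ : ι => ℚ) e)) ⁻¹'
      {x : ι → ℚ | MvPolynomial.eval x Q = 0}
      = {x : Fin (Fintype.card ι) → ℚ | MvPolynomial.eval x Q' = 0} := by
    ext x
    simp only [Set.mem_preimage, Set.mem_setOf_eq, hQ'def, MvPolynomial.eval_rename]
    have : ⇑(MeasurableEquiv.piCongrLeft (fun _ : ι => ℚ) e) x = x ∘ e.symm := by
      funext i
      simp [MeasurableEquiv.piCongrLeft, Equiv.piCongrLeft_apply]
    rw [this]
  have := mp.measure_preimage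
    (measurableSet_all {x : ι → ℚ | MvPolynomial.eval x Q = 0}).nullMeasurableSet
  rw [hpre] at this
  calc Measure.pi μ {x | MvPolynomial.eval x Q = 0}
      = Measure.pi (fun i => μ (e i)) {x | MvPolynomial.eval x Q' = 0} := this.symm
  _ ≤ Q'.totalDegree * ε := hSZfin _ _ (fun i => hprob _) ε (fun i r => hε _ r) Q' hQ'
  _ ≤ Q.totalDegree * ε :=
      mul_le_mul_left (by exact_mod_cast MvPolynomial.totalDegree_rename_le _ _) ε
/-- **Completeness of generated ideals of random polynomial systems.**
For every `D ≥ 2` there is `C = C(D) > 0` such that for `2 ≤ D ≤ d ≤ n` and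
`m ≥ C·n^D/d^(D-1)`, if the coefficients of the homogeneous degree-`D` polynomials
`g_1, …, g_m` and the scalars `b_1, …, b_m` are sampled independently from `n^(2d)`-nice
distributions on `ℚ`, then with probability at least `1 - n^(-d)` the generated ideal of
`{g_i - b_i}` at degree `d` is complete: every homogeneous polynomial of degree `d` equals
`∑ i, a_i·(g_i - b_i)` with each `a_i` of degree at most `d - D`. -/
theorem generated_ideal_complete_random_polynomials :
    ∀ D : ℕ, 2 ≤ D →
      ∃ C : ℝ, 0 < C ∧
        ∀ d n m : ℕ, D ≤ d → d ≤ n →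
          C * (n : ℝ) ^ D / (d : ℝ) ^ (D - 1) ≤ (m : ℝ) →
          ∀ ν : ((Fin m × Sym (Fin n) D) ⊕ Fin m) → Measure ℚ,
            (∀ i, IsNiceDistribution (n ^ (2 * d)) (ν i)) →
            1 - 1 / (n : ℝ≥0∞) ^ d ≤
              Measure.pi ν
                {ω : ((Fin m × Sym (Fin n) D) ⊕ Fin m) → ℚ |
                  ∀ f : MvPolynomial (Fin n) ℚ, f.IsHomogeneous d →
                    ∃ a : Fin m → MvPolynomial (Fin n) ℚ,
                      (∀ i, (a i).totalDegree ≤ d - D) ∧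
                      (∑ i : Fin m,
                          a i *
                            ((∑ s : Sym (Fin n) D,
                                MvPolynomial.C (ω (Sum.inl (i, s))) * symMonomial s) -
                              MvPolynomial.C (ω (Sum.inr i))) = f)} := by
  intro D hD
  refine ⟨(((6 * D) ^ (D + 1) : ℕ) : ℝ), by positivity, ?_⟩
  intro d n m hdD hdn hm ν hν
  haveI : ∀ i, IsProbabilityMeasure (ν i) := fun i => (hν i).1
  -- arithmetic: enough generators
  set t := d / D with ht
  set L := (n + t - 1) / t with hL
  have hD0 : 0 < D := by omega
  have ht1 : 1 ≤ t := (Nat.one_le_div_iff hD0).mpr hdD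
  have htd : t ≤ d := by rw [ht]; exact Nat.div_le_self d D
  have hLt : L * t ≤ n + t - 1 := by rw [hL]; exact Nat.div_mul_le_self _ _
  have hDt : D * t ≤ d := by
    rw [ht]; exact le_trans (Nat.le_of_eq (mul_comm _ _)) (Nat.div_mul_le_self d D)
  have hd2Dt : d ≤ 2 * D * t := by
    have h1 : D * t + d % D = d := by rw [ht]; exact Nat.div_add_mod d D
    have h2 : d % D < D := Nat.mod_lt d hD0
    have h3 : D ≤ D * t := Nat.le_mul_of_pos_right D (by omega)
    have h4 : 2 * D * t = D * t + D * t := by ring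
    omega
  have hNat : 2 * (t * Nat.multichoose L D) * d ^ (D - 1) ≤ (6 * D) ^ (D + 1) * n ^ D :=
    count_arith hD hdD hdn t L ht1 htd hLt hDt hd2Dt
  have hdpos : (0:ℝ) < (d : ℝ) ^ (D - 1) := by
    have : (0:ℝ) < (d:ℝ) := by
      have : 2 ≤ d := le_trans hD hdD
      positivity
    positivity
  have hreal : ((2 * (t * Nat.multichoose L D) : ℕ) : ℝ)
      ≤ (((6 * D) ^ (D + 1) : ℕ) : ℝ) * (n : ℝ) ^ D / (d : ℝ) ^ (D - 1) := by
    rw [le_div_iff₀ hdpos]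
    exact_mod_cast hNat
  have hm' : 2 * (t * Nat.multichoose L D) ≤ m := by
    have := le_trans hreal hm
    exact_mod_cast this
  -- certificate polynomial
  have hm'' : 2 * (d / D * Nat.multichoose ((n + d / D - 1) / (d / D)) D) ≤ m := by
    rw [hL, ht] at hm'
    exact hm'
  obtain ⟨P, hPne, hPdeg, hPrep⟩ := exists_certificate hD hdD hdn hm''
  -- Schwartz-Zippel
  set ε : ℝ≥0∞ := 1 / ((n ^ (2 * d) : ℕ) : ℝ≥0∞) ^ 100 with hε
  have hatom : ∀ i r, ν i {r} ≤ ε := fun i r => (hν i).2.2 r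
  have hSZ : Measure.pi ν {ω | MvPolynomial.eval ω P = 0} ≤ P.totalDegree * ε :=
    schwartz_zippel ν (fun i => (hν i).1) ε hatom P hPne schwartz_zippel_fin
  -- numeric bound
  have hn2 : 2 ≤ n := le_trans hD (le_trans hdD hdn)
  have hNne : ((n:ℝ≥0∞)) ≠ 0 := by
    simp only [ne_eq, Nat.cast_eq_zero]
    omega
  have hNnetop : ((n:ℝ≥0∞)) ≠ ⊤ := ENNReal.natCast_ne_top n
  have hεeq : ε = ((n:ℝ≥0∞) ^ (200 * d))⁻¹ := by
    rw [hε, one_div]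
    congr 1
    rw [show ((n ^ (2 * d) : ℕ) : ℝ≥0∞) = (n:ℝ≥0∞) ^ (2 * d) by push_cast; rfl, ← pow_mul]
    congr 1
    ring
  have hKN : ((Nat.multichoose n d + Nat.multichoose n (d - D) : ℕ) : ℝ≥0∞) * (n:ℝ≥0∞) ^ d
      ≤ (n:ℝ≥0∞) ^ (200 * d) := by
    have := index_card_arith hD hdD hdn
    exact_mod_cast this
  have hbound : (P.totalDegree : ℝ≥0∞) * ε ≤ 1 / (n:ℝ≥0∞) ^ d := by
    rw [hεeq, one_div]
    rw [ENNReal.le_inv_iff_mul_le]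
    calc (P.totalDegree : ℝ≥0∞) * ((n:ℝ≥0∞) ^ (200 * d))⁻¹ * (n:ℝ≥0∞) ^ d
        = ((P.totalDegree : ℝ≥0∞) * (n:ℝ≥0∞) ^ d) * ((n:ℝ≥0∞) ^ (200 * d))⁻¹ := by ring
    _ ≤ ((n:ℝ≥0∞) ^ (200 * d)) * ((n:ℝ≥0∞) ^ (200 * d))⁻¹ := by
        refine mul_le_mul_left ?_ _
        refine le_trans (mul_le_mul_left ?_ _) hKN
        exact_mod_cast hPdeg
    _ ≤ 1 := le_of_eq (ENNReal.mul_inv_cancel (pow_ne_zero _ hNne) (ENNReal.pow_ne_top hNnetop))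
  -- measure computation
  set Ebad : Set (((Fin m × Sym (Fin n) D) ⊕ Fin m) → ℚ) :=
    {ω | MvPolynomial.eval ω P = 0} with hEbad
  have hmeas : MeasurableSet Ebad := measurableSet_all Ebad
  have hcompl : Measure.pi ν Ebadᶜ = 1 - Measure.pi ν Ebad := prob_compl_eq_one_sub hmeas
  have hsub : Ebadᶜ ⊆ {ω : ((Fin m × Sym (Fin n) D) ⊕ Fin m) → ℚ |
      ∀ f : MvPolynomial (Fin n) ℚ, f.IsHomogeneous d →
        ∃ a : Fin m → MvPolynomial (Fin n) ℚ,
          (∀ i, (a i).totalDegree ≤ d - D) ∧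
          (∑ i : Fin m, a i * ((∑ s : Sym (Fin n) D,
              MvPolynomial.C (ω (Sum.inl (i, s))) * symMonomial s) -
            MvPolynomial.C (ω (Sum.inr i))) = f)} := by
    intro ω hω
    have hne : MvPolynomial.eval ω P ≠ 0 := hω
    exact hPrep ω hne
  calc 1 - 1 / (n : ℝ≥0∞) ^ d ≤ 1 - Measure.pi ν Ebad :=
        tsub_le_tsub_left (le_trans hSZ hbound) 1
  _ = Measure.pi ν Ebadᶜ := hcompl.symm
  _ ≤ _ := measure_mono hsub
end Core2
end

section
/- Let D, d, m, n be positive integers with d a multiple of D. Let g_1, …, g_m be homogeneous real polynomials of degree D in variables x_1, …, x_n, and let b_1, …, b_m ∈ ℝ with b_1 ≠ 0. Suppose that every homogeneous polynomial of degree d in x_1, …, x_n can be written as Σ_{i=1}^m a_i·(g_i − b_i) with each a_i a polynomial of degree at most d − D. Then there exist polynomials a_1, …, a_m of degree at most d − D such that the polynomial identity Σ_{i=1}^m a_i·(g_i − b_i) = −1 holds. -/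
/-- **From completeness of the generated ideal to a Nullstellensatz refutation.**
Let `D, d, m, n` be positive integers with `D ∣ d`. Let `g_1, …, g_m` be homogeneous
degree-`D` real polynomials in `n` variables and `b : Fin m → ℝ` with `b 0 ≠ 0`. If every
homogeneous polynomial of degree `d` can be written as `∑ i, a_i·(g_i - b_i)` with each
`a_i` of degree at most `d - D`, then there are polynomials `a_i` of degree at most `d - D`
with `∑ i, a_i·(g_i - b_i) = -1`. -/
theorem nullsatz_refutation_of_complete_ideal
    (D d m n : ℕ) (hD : 0 < D) (hd : 0 < d) (hm : 0 < m) (hn : 0 < n)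
    (hdvd : D ∣ d)
    (g : Fin m → MvPolynomial (Fin n) ℝ) (hg : ∀ i, (g i).IsHomogeneous D)
    (b : Fin m → ℝ) (hb1 : b ⟨0, hm⟩ ≠ 0)
    (hcomplete : ∀ f : MvPolynomial (Fin n) ℝ, f.IsHomogeneous d →
      ∃ a : Fin m → MvPolynomial (Fin n) ℝ,
        (∀ i, (a i).totalDegree ≤ d - D) ∧
        ∑ i : Fin m, a i * (g i - MvPolynomial.C (b i)) = f) :
    ∃ a : Fin m → MvPolynomial (Fin n) ℝ,
      (∀ i, (a i).totalDegree ≤ d - D) ∧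
      ∑ i : Fin m, a i * (g i - MvPolynomial.C (b i)) = -1 := by
  obtain ⟨k, hk⟩ := hdvd
  set i0 : Fin m := ⟨0, hm⟩
  have hk1 : 1 ≤ k := Nat.pos_of_ne_zero (by rintro rfl; simp at hk; omega)
  -- g i0 ^ k is homogeneous of degree d
  have hgk : (g i0 ^ k).IsHomogeneous d := by
    rw [hk]; exact (hg i0).pow k
  obtain ⟨a, ha, hsum⟩ := hcomplete _ hgk
  -- the geometric cofactor
  set q : MvPolynomial (Fin n) ℝ :=
    ∑ j ∈ Finset.range k, g i0 ^ j * (MvPolynomial.C (b i0)) ^ (k - 1 - j) with hq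
  have hgeom : q * (g i0 - MvPolynomial.C (b i0))
      = g i0 ^ k - (MvPolynomial.C (b i0)) ^ k := geom_sum₂_mul _ _ k
  have hqdeg : q.totalDegree ≤ d - D := by
    refine (MvPolynomial.totalDegree_finset_sum _ _).trans ?_
    apply Finset.sup_le
    intro j hj
    have hj' : j ≤ k - 1 := by
      have := Finset.mem_range.mp hj; omega
    calc (g i0 ^ j * (MvPolynomial.C (b i0)) ^ (k - 1 - j)).totalDegree
        ≤ (g i0 ^ j).totalDegree + ((MvPolynomial.C (b i0)) ^ (k-1-j)).totalDegree :=
          MvPolynomial.totalDegree_mul _ _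
      _ ≤ d - D := by
          have h1 := MvPolynomial.totalDegree_pow (g i0) j
          have h2 : ((MvPolynomial.C (b i0) : MvPolynomial (Fin n) ℝ) ^ (k-1-j)).totalDegree = 0 := by
            rw [← MvPolynomial.C_pow]; exact MvPolynomial.totalDegree_C _
          have h3 : (g i0).totalDegree ≤ D := (hg i0).totalDegree_le
          have h4 : j * (g i0).totalDegree ≤ (k-1) * D := Nat.mul_le_mul hj' h3
          have h5 : (k-1) * D = d - D := by
            rw [hk, mul_comm D k, Nat.sub_mul, one_mul]
          omega
  set c : ℝ := -(b i0 ^ k)⁻¹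
  refine ⟨fun i => MvPolynomial.C c * (a i - if i = i0 then q else 0), ?_, ?_⟩
  · intro i
    refine (MvPolynomial.totalDegree_mul _ _).trans ?_
    rw [MvPolynomial.totalDegree_C]
    simp only [zero_add]
    by_cases h : i = i0
    · simp only [h, if_pos rfl]
      refine (MvPolynomial.totalDegree_sub _ _).trans ?_
      exact max_le (ha i0) hqdeg
    · simp [h, ha i]
  · have key : ∑ i : Fin m, (MvPolynomial.C c * (a i - if i = i0 then q else 0)) * (g i - MvPolynomial.C (b i))
        = MvPolynomial.C c * (∑ i : Fin m, a i * (g i - MvPolynomial.C (b i))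
            - q * (g i0 - MvPolynomial.C (b i0))) := by
      simp_rw [mul_assoc, ← Finset.mul_sum]
      congr 1
      simp_rw [sub_mul, Finset.sum_sub_distrib]
      congr 1
      rw [Finset.sum_eq_single i0]
      · simp
      · intro i _ h; simp [h]
      · simp
    rw [key, hsum, hgeom]
    have : g i0 ^ k - (g i0 ^ k - MvPolynomial.C (b i0) ^ k) = MvPolynomial.C (b i0) ^ k := by ring
    rw [this, ← MvPolynomial.C_pow, ← MvPolynomial.C_mul]
    have hbk : b i0 ^ k ≠ 0 := pow_ne_zero _ hb1
    rw [show c * b i0 ^ k = -1 by show -(b i0 ^ k)⁻¹ * b i0 ^ k = -1; rw [neg_mul, inv_mul_cancel₀ hbk]]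
    simp
end

section
/- Let d, n, K be positive integers with K ≤ n^{2d}. Let A, B', C₁, C₂ be fixed matrices with rational entries, where A has full row rank, B' is K × K, and the block matrix M' = [[A, C₂], [C₁, B' + g·I_K]] is well-formed (some columns of A, C₁ and of C₂, B' + g·I_K aligned as indicated). Let g be a ℚ-valued random variable satisfying P(g = r) ≤ n^{−200d} for every rational r. Then with probability at least 1 − n^{−100d} over g, the matrix M' has full row rank. -/
open MeasureTheory Matrix Polynomial
open scoped ENNReal

lemma my_eval_charpoly {n R : Type*} [Fintype n] [DecidableEq n] [CommRing R]
    (M : Matrix n n R) (r : R) :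
    M.charpoly.eval r = (r • (1 : Matrix n n R) - M).det := by
  rw [Matrix.charpoly, ← Polynomial.coe_evalRingHom, RingHom.map_det]
  congr 1
  ext i j
  by_cases h : i = j <;>
    simp [h, Matrix.charmatrix_apply, Matrix.one_apply, Matrix.diagonal]

lemma my_vecMul_inj {m n : Type*} [Fintype m] [Fintype n] (M : Matrix m n ℚ)
    (h : ∀ x, x ᵥ* M = 0 → x = 0) : Function.Injective M.vecMul := by
  rw [← Matrix.coe_vecMulLinear, ← LinearMap.ker_eq_bot, LinearMap.ker_eq_bot']
  exact fun x hx => h x hx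

lemma my_core {K : ℕ} {ρ κ : Type} [Fintype ρ] [Fintype κ]
    (A : Matrix ρ κ ℚ) (B' : Matrix (Fin K) (Fin K) ℚ)
    (C₁ : Matrix (Fin K) κ ℚ) (C₂ : Matrix ρ (Fin K) ℚ)
    (hA : LinearIndependent ℚ A) :
    ∃ p : Polynomial ℚ, p.Monic ∧ p.natDegree = K ∧
      ∀ g : ℚ, p.eval g ≠ 0 →
        LinearIndependent ℚ
          (Matrix.fromBlocks A C₂ C₁ (B' + g • (1 : Matrix (Fin K) (Fin K) ℚ))) := by
  classical
  set G : Matrix ρ ρ ℚ := A * Aᵀ with hGdef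
  have hAinj : Function.Injective A.vecMul := Matrix.vecMul_injective_iff.mpr hA
  have hGinj : ∀ x : ρ → ℚ, x ᵥ* G = 0 → x = 0 := by
    intro x hx
    have hy : (A *ᵥ (x ᵥ* A)) = 0 := by
      rw [← Matrix.vecMul_transpose, ← Matrix.vecMul_vecMul, ← hGdef] at *
      exact hx
    have h0 : (x ᵥ* A) ⬝ᵥ (x ᵥ* A) = 0 := by
      rw [← Matrix.dotProduct_mulVec, hy, dotProduct_zero]
    have : x ᵥ* A = 0 := dotProduct_self_eq_zero.mp h0
    apply hAinj
    show x ᵥ* A = 0 ᵥ* A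
    rw [this, Matrix.zero_vecMul]
  have hG : IsUnit G :=
    Matrix.vecMul_injective_iff_isUnit.mp (my_vecMul_inj G hGinj)
  have : Invertible G := hG.invertible
  set E : Matrix (Fin K) (Fin K) ℚ := C₁ * Aᵀ * ⅟G * C₂ - B' with hEdef
  refine ⟨E.charpoly, E.charpoly_monic, by simp [Matrix.charpoly_natDegree_eq_dim], ?_⟩
  intro g hg
  rw [my_eval_charpoly] at hg
  set D : Matrix (Fin K) (Fin K) ℚ := B' + g • (1 : Matrix (Fin K) (Fin K) ℚ) with hDdef
  set N : Matrix (ρ ⊕ Fin K) (ρ ⊕ Fin K) ℚ := Matrix.fromBlocks G C₂ (C₁ * Aᵀ) D with hNdef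
  have hNdet : N.det ≠ 0 := by
    rw [hNdef, Matrix.det_fromBlocks₁₁]
    have hs : D - C₁ * Aᵀ * ⅟G * C₂ = g • (1 : Matrix (Fin K) (Fin K) ℚ) - E := by
      rw [hEdef, hDdef]; abel
    rw [hs]
    exact mul_ne_zero (Matrix.isUnit_iff_isUnit_det G |>.mp hG).ne_zero hg
  have hN : IsUnit N := (Matrix.isUnit_iff_isUnit_det N).mpr (isUnit_iff_ne_zero.mpr hNdet)
  have hNinj : Function.Injective N.vecMul := Matrix.vecMul_injective_iff_isUnit.mpr hN
  refine (Matrix.vecMul_injective_iff (M := Matrix.fromBlocks A C₂ C₁ D)).mp ?_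
  apply my_vecMul_inj
  intro x hx
  set F : Matrix (κ ⊕ Fin K) (ρ ⊕ Fin K) ℚ :=
    Matrix.fromBlocks Aᵀ 0 0 (1 : Matrix (Fin K) (Fin K) ℚ) with hFdef
  have hMF : Matrix.fromBlocks A C₂ C₁ D * F = N := by
    rw [hFdef, hNdef, Matrix.fromBlocks_multiply]
    simp [hGdef]
  have : x ᵥ* N = 0 := by
    rw [← hMF, ← Matrix.vecMul_vecMul, hx, Matrix.zero_vecMul]
  have h0 : x ᵥ* N = (0 : (ρ ⊕ Fin K) → ℚ) ᵥ* N := by rw [this, Matrix.zero_vecMul]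
  exact hNinj h0

lemma my_arith (d n K : ℕ) (hd : 0 < d) (hn : 0 < n) (hK : K ≤ n ^ (2 * d)) :
    (K : ℝ≥0∞) * (1 / (n : ℝ≥0∞) ^ (200 * d)) ≤ 1 / (n : ℝ≥0∞) ^ (100 * d) := by
  have hn1 : (1 : ℝ≥0∞) ≤ (n : ℝ≥0∞) := by exact_mod_cast Nat.one_le_cast.mpr hn
  have hpow : ∀ m : ℕ, (n : ℝ≥0∞) ^ m ≠ 0 := fun m => by positivity
  have hpowt : ∀ m : ℕ, (n : ℝ≥0∞) ^ m ≠ ⊤ := fun m => by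
    exact_mod_cast ENNReal.pow_ne_top (ENNReal.natCast_ne_top n)
  have h1 : (K : ℝ≥0∞) ≤ (n : ℝ≥0∞) ^ (100 * d) := by
    calc (K : ℝ≥0∞) ≤ (n : ℝ≥0∞) ^ (2 * d) := by exact_mod_cast hK
      _ ≤ (n : ℝ≥0∞) ^ (100 * d) := by
          exact pow_le_pow_right₀ hn1 (by omega)
  have h2 : (n : ℝ≥0∞) ^ (200 * d) = (n : ℝ≥0∞) ^ (100 * d) * (n : ℝ≥0∞) ^ (100 * d) := by
    rw [← pow_add]; ring_nf
  calc (K : ℝ≥0∞) * (1 / (n : ℝ≥0∞) ^ (200 * d))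
      ≤ (n : ℝ≥0∞) ^ (100 * d) * (1 / (n : ℝ≥0∞) ^ (200 * d)) := by
        exact mul_le_mul_left h1 _
    _ = 1 / (n : ℝ≥0∞) ^ (100 * d) := by
        rw [h2, one_div, ENNReal.mul_inv (Or.inl (hpow _)) (Or.inl (hpowt _)),
          ← mul_assoc, ENNReal.mul_inv_cancel (hpow _) (hpowt _), one_mul, one_div]

/-- **Block matrices with one random diagonal shift have full row rank w.h.p.**
Let `d, n, K` be positive integers with `K ≤ n^(2d)`. Let `A, B', C₁, C₂` be fixed rational
matrices, with `A` of full row rank and `B'` of size `K × K`, and let `g` be a `ℚ`-valued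
random variable with `P(g = r) ≤ n^(-200d)` for every rational `r`. Then with probability
at least `1 - n^(-100d)` the block matrix `[[A, C₂], [C₁, B' + g·I_K]]` has full row rank
(its rows are linearly independent). -/
theorem block_matrix_full_row_rank
    (d n K : ℕ) (hd : 0 < d) (hn : 0 < n) (hK : K ≤ n ^ (2 * d))
    {ρ κ : Type} [Fintype ρ] [Fintype κ]
    (A : Matrix ρ κ ℚ) (B' : Matrix (Fin K) (Fin K) ℚ)
    (C₁ : Matrix (Fin K) κ ℚ) (C₂ : Matrix ρ (Fin K) ℚ)
    (hA : LinearIndependent ℚ A)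
    (μ : Measure ℚ) (hμ : IsProbabilityMeasure μ)
    (hatom : ∀ r : ℚ, μ {r} ≤ 1 / (n : ℝ≥0∞) ^ (200 * d)) :
    1 - 1 / (n : ℝ≥0∞) ^ (100 * d) ≤
      μ {g : ℚ |
        LinearIndependent ℚ (Matrix.fromBlocks A C₂ C₁ (B' + g • (1 : Matrix (Fin K) (Fin K) ℚ)))} := by
  classical
  obtain ⟨p, hmonic, hdeg, hp⟩ := my_core A B' C₁ C₂ hA
  set S : Set ℚ := {g : ℚ |
    LinearIndependent ℚ (Matrix.fromBlocks A C₂ C₁ (B' + g • (1 : Matrix (Fin K) (Fin K) ℚ)))}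
  have hpne : p ≠ 0 := hmonic.ne_zero
  have hsub : Sᶜ ⊆ ↑p.roots.toFinset := by
    intro g hg
    simp only [Set.mem_compl_iff, Set.mem_setOf_eq, S] at hg
    have : p.eval g = 0 := by
      by_contra h
      exact hg (hp g h)
    simp [Multiset.mem_toFinset, Polynomial.mem_roots hpne, Polynomial.IsRoot, this]
  have hcard : p.roots.toFinset.card ≤ K := by
    calc p.roots.toFinset.card ≤ Multiset.card p.roots := p.roots.toFinset_card_le
      _ ≤ p.natDegree := p.card_roots'
      _ = K := hdeg
  have hmeas : MeasurableSet S := trivial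
  have hSc : μ Sᶜ ≤ 1 / (n : ℝ≥0∞) ^ (100 * d) := by
    calc μ Sᶜ ≤ μ (⋃ r ∈ p.roots.toFinset, {r}) := by
          apply measure_mono
          intro g hg
          simpa using hsub hg
      _ ≤ ∑ r ∈ p.roots.toFinset, μ {r} := measure_biUnion_finset_le _ _
      _ ≤ p.roots.toFinset.card • (1 / (n : ℝ≥0∞) ^ (200 * d)) :=
          Finset.sum_le_card_nsmul _ _ _ (fun r _ => hatom r)
      _ = (p.roots.toFinset.card : ℝ≥0∞) * (1 / (n : ℝ≥0∞) ^ (200 * d)) := by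
          simp [nsmul_eq_mul]
      _ ≤ (K : ℝ≥0∞) * (1 / (n : ℝ≥0∞) ^ (200 * d)) := by
          exact mul_le_mul_left (by exact_mod_cast hcard) _
      _ ≤ 1 / (n : ℝ≥0∞) ^ (100 * d) := my_arith d n K hd hn hK
  have hS : μ S = 1 - μ Sᶜ := by
    have := prob_compl_eq_one_sub (μ := μ) (s := Sᶜ) trivial
    rwa [compl_compl] at this
  rw [hS]
  exact tsub_le_tsub_left hSc 1
end

section
/- Let d, n be integers with 2 ≤ d ≤ n. There is an absolute constant C > 0 such that there exist multisets γ_1, …, γ_N, each of size 2 with elements in {1,…,n} (repeated elements allowed), with N ≤ n²/(2(d−1)) + C·n, such that every multiset of size d with elements in {1,…,n} contains at least one γ_k as a sub-multiset. -/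
theorem pair_le_of_mem {β : Type*} [DecidableEq β] {x y : β} {t : Multiset β} (hxy : x ≠ y)
    (hx : x ∈ t) (hy : y ∈ t) : ({x, y} : Multiset β) ≤ t := by
  rw [Multiset.le_iff_count]
  intro a
  rw [Multiset.insert_eq_cons, Multiset.count_cons, Multiset.count_singleton]
  by_cases hax : a = x
  · subst hax
    have : 1 ≤ t.count a := Multiset.one_le_count_iff_mem.mpr hx
    simp [hxy]
    omega
  · by_cases hay : a = y
    · subst hay
      simpa [hax] using Multiset.one_le_count_iff_mem.mpr hy
    · simp [hax, hay]

/-- **Covering all size-`d` multisets by size-2 multisets.**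
There is an absolute constant `C > 0` such that for all `2 ≤ d ≤ n` there exist multisets
`γ_1, …, γ_N` over `{1,…,n}`, each of size `2`, with `N ≤ n²/(2(d-1)) + C·n`, such that
every multiset of size `d` over `{1,…,n}` contains some `γ_k` as a sub-multiset. -/
theorem cover_multisets_by_pairs :
    ∃ C : ℝ, 0 < C ∧
      ∀ d n : ℕ, 2 ≤ d → d ≤ n →
        ∃ (N : ℕ) (γ : Fin N → Multiset (Fin n)),
          (∀ k, Multiset.card (γ k) = 2) ∧
          ((N : ℝ) ≤ (n : ℝ) ^ 2 / (2 * ((d : ℝ) - 1)) + C * n) ∧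
          (∀ α : Multiset (Fin n), Multiset.card α = d → ∃ k, γ k ≤ α) := by
  refine ⟨2, by norm_num, ?_⟩
  intro d n hd hdn
  set m := d - 1 with hm
  have hm1 : 1 ≤ m := by omega
  have hmn : m ≤ n := by omega
  set s := n / m + 1 with hs
  classical
  set Fle : Finset (Fin n × Fin n) :=
    Finset.univ.filter (fun p => p.1.val % m = p.2.val % m ∧ p.1.val ≤ p.2.val) with hFle
  set S : Finset (Multiset (Fin n)) := Fle.image (fun p => ({p.1, p.2} : Multiset (Fin n)))
    with hSdef
  refine ⟨S.card, fun k => ((S.equivFin.symm k : S) : Multiset (Fin n)), ?_, ?_, ?_⟩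
  · -- each γ has card 2
    intro k
    have hmem : ((S.equivFin.symm k : S) : Multiset (Fin n)) ∈ S := (S.equivFin.symm k).2
    obtain ⟨p, -, hp⟩ := Finset.mem_image.mp hmem
    have h2 : Multiset.card ({p.1, p.2} : Multiset (Fin n)) = 2 := by simp
    show Multiset.card ((S.equivFin.symm k : S) : Multiset (Fin n)) = 2
    exact hp ▸ h2
  · -- cardinality bound
    -- counting in ℕ
    set F : Finset (Fin n × Fin n) :=
      Finset.univ.filter (fun p => p.1.val % m = p.2.val % m) with hF
    set Fge : Finset (Fin n × Fin n) :=
      Finset.univ.filter (fun p => p.1.val % m = p.2.val % m ∧ p.2.val ≤ p.1.val) with hFge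
    have hcard_eq : Fle.card = Fge.card := by
      have himg : Fle.image Prod.swap = Fge := by
        ext p
        simp only [hFle, hFge, Finset.mem_image, Finset.mem_filter, Finset.mem_univ, true_and]
        constructor
        · rintro ⟨q, ⟨h1, h2⟩, rfl⟩
          exact ⟨h1.symm, h2⟩
        · rintro ⟨h1, h2⟩
          exact ⟨p.swap, ⟨h1.symm, h2⟩, p.swap_swap⟩
      rw [← himg, Finset.card_image_of_injective _ Prod.swap_injective]
    have hunion : Fle ∪ Fge = F := by
      ext p
      simp only [hFle, hFge, hF, Finset.mem_union, Finset.mem_filter, Finset.mem_univ, true_and]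
      constructor
      · rintro (⟨h, -⟩ | ⟨h, -⟩) <;> exact h
      · intro h
        rcases le_total p.1.val p.2.val with h2 | h2
        · exact Or.inl ⟨h, h2⟩
        · exact Or.inr ⟨h, h2⟩
    have hinter : (Fle ∩ Fge).card ≤ n := by
      have : (Fle ∩ Fge).card ≤ (Finset.univ : Finset (Fin n)).card := by
        apply Finset.card_le_card_of_injOn Prod.fst (fun _ _ => Finset.mem_univ _)
        intro p hp q hq hfst
        simp only [hFle, hFge, Finset.mem_coe, Finset.mem_inter, Finset.mem_filter,
          Finset.mem_univ, true_and] at hp hq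
        have hp2 : p.2 = p.1 := Fin.ext (le_antisymm hp.2.2 hp.1.2)
        have hq2 : q.2 = q.1 := Fin.ext (le_antisymm hq.2.2 hq.1.2)
        exact Prod.ext hfst (by rw [hp2, hq2, hfst])
      simpa using this
    have hFcard : F.card ≤ n * s := by
      have : F.card ≤ ((Finset.univ : Finset (Fin n)) ×ˢ Finset.range s).card := by
        apply Finset.card_le_card_of_injOn (fun p => (p.1, p.2.val / m))
        · intro p hp
          simp only [Finset.mem_coe, Finset.mem_product, Finset.mem_univ, Finset.mem_range, true_and]
          have : p.2.val / m ≤ n / m := Nat.div_le_div_right (le_of_lt p.2.isLt)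
          omega
        · intro p hp q hq heq
          simp only [hF, Finset.mem_coe, Finset.mem_filter, Finset.mem_univ, true_and] at hp hq
          simp only [Prod.mk.injEq] at heq
          obtain ⟨h1, h2⟩ := heq
          have hmod : p.2.val % m = q.2.val % m := by
            rw [← hp, ← hq, h1]
          have : p.2.val = q.2.val := by
            conv_lhs => rw [← Nat.div_add_mod p.2.val m]
            conv_rhs => rw [← Nat.div_add_mod q.2.val m]
            rw [h2, hmod]
          exact Prod.ext h1 (Fin.ext this)
      simpa using this
    have hkey : 2 * Fle.card ≤ n * s + n := by
      have := Finset.card_union_add_card_inter Fle Fge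
      rw [hunion] at this
      omega
    have himgle : S.card ≤ Fle.card := Finset.card_image_le
    have hScard : 2 * S.card ≤ n * s + n := by omega
    -- now real arithmetic
    have hmR : ((m : ℝ)) = (d : ℝ) - 1 := by
      have : ((m : ℝ)) = ((d : ℕ) : ℝ) - 1 := by
        rw [hm]; push_cast [Nat.cast_sub (by omega : 1 ≤ d)]; ring
      simpa using this
    have hmpos : (0 : ℝ) < (m : ℝ) := by positivity
    have hdiv : ((n / m : ℕ) : ℝ) ≤ (n : ℝ) / (m : ℝ) := Nat.cast_div_le
    have hcast : (2 : ℝ) * S.card ≤ (n : ℝ) * s + n := by exact_mod_cast hScard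
    have hsR : ((s : ℕ) : ℝ) = ((n / m : ℕ) : ℝ) + 1 := by rw [hs]; push_cast; ring
    have h1 : (n : ℝ) * s ≤ (n : ℝ) * ((n : ℝ) / m + 1) := by
      rw [hsR]
      apply mul_le_mul_of_nonneg_left _ (by positivity)
      linarith
    have h2 : (2 : ℝ) * S.card ≤ (n : ℝ) ^ 2 / m + 2 * n := by
      have : (n : ℝ) * ((n : ℝ) / m + 1) = (n : ℝ) ^ 2 / m + n := by
        rw [mul_add, mul_one, mul_div_assoc', sq]
      nlinarith
    rw [← hmR]
    have : (n : ℝ) ^ 2 / (2 * (m : ℝ)) = ((n : ℝ) ^ 2 / m) / 2 := by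
      rw [div_div, mul_comm]
    rw [this]
    linarith
  · -- covering
    intro α hα
    by_contra hcon
    push_neg at hcon
    have hnS : ∀ β ∈ S, ¬ β ≤ α := by
      intro β hβ hle
      exact hcon (S.equivFin ⟨β, hβ⟩) (by simpa using hle)
    -- all pairs within a residue class are in S
    have hinS : ∀ x y : Fin n, x.val % m = y.val % m → x.val ≤ y.val →
        ({x, y} : Multiset (Fin n)) ∈ S := by
      intro x y h1 h2
      rw [hSdef, Finset.mem_image]
      refine ⟨(x, y), ?_, rfl⟩
      simp only [hFle, Finset.mem_filter, Finset.mem_univ, true_and]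
      exact ⟨h1, h2⟩
    -- nodup
    have hnd : α.Nodup := by
      rw [Multiset.nodup_iff_count_le_one]
      intro x
      by_contra hcount
      push_neg at hcount
      have hrep : Multiset.replicate 2 x ≤ α :=
        Multiset.le_count_iff_replicate_le.mp (by omega)
      exact hnS {x, x} (hinS x x rfl le_rfl) hrep
    -- residues distinct
    have hinj : Set.InjOn (fun x : Fin n => x.val % m) α.toFinset := by
      intro x hx y hy hxy
      by_contra hne
      have hxm : x ∈ α := by simpa using hx
      have hym : y ∈ α := by simpa using hy
      rcases le_total x.val y.val with h | h
      · exact hnS {x, y} (hinS x y hxy h) (pair_le_of_mem hne hxm hym)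
      · exact hnS {y, x} (hinS y x hxy.symm h)
          (pair_le_of_mem (Ne.symm hne) hym hxm)
    have hc1 : α.toFinset.card = d := by
      rw [Multiset.toFinset_card_of_nodup hnd, hα]
    have hc2 : (α.toFinset.image (fun x : Fin n => x.val % m)).card = α.toFinset.card :=
      Finset.card_image_of_injOn hinj
    have hc3 : (α.toFinset.image (fun x : Fin n => x.val % m)) ⊆ Finset.range m := by
      intro r hr
      rw [Finset.mem_image] at hr
      obtain ⟨x, -, rfl⟩ := hr
      exact Finset.mem_range.mpr (Nat.mod_lt _ (by omega))
    have := Finset.card_le_card hc3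
    rw [hc2, hc1] at this
    simp at this
    omega
end

section
/- Let D, d, n be integers with 3 ≤ D ≤ d ≤ n. There exist multisets γ_1, …, γ_N, each of size D with elements in {1,…,n} (repeated elements allowed), with N ≤ ((4e)^D / D)·n^D/d^{D−1}, such that every multiset of size d with elements in {1,…,n} contains at least one γ_k as a sub-multiset. -/
open Finset in
lemma aux_sym_fiber_card_le (n B j D : ℕ) (hB : 0 < B) (hn : 0 < n) :
    ((Finset.univ.filter (fun x : Fin n => x.val / B = j)).sym D).card
      ≤ (B + D - 1).choose D := by
  classical
  set s : Finset (Fin n) := Finset.univ.filter (fun x : Fin n => x.val / B = j) with hs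
  have key : (s.sym D).card ≤ (Finset.univ : Finset (Sym (Fin B) D)).card := by
    refine Finset.card_le_card_of_injOn
      (fun m => m.map (fun x : Fin n => (⟨x.val % B, Nat.mod_lt _ hB⟩ : Fin B)))
      (fun _ _ => Finset.mem_univ _) ?_
    set g : Fin n → Fin B := fun x => (⟨x.val % B, Nat.mod_lt _ hB⟩ : Fin B) with hg
    set h : Fin B → Fin n := fun y => (⟨min (j * B + y.val) (n - 1), by omega⟩ : Fin n) with hh
    have left_inv : ∀ m ∈ s.sym D, (Sym.map g m).map h = m := by
      intro m hm
      rw [Sym.map_map]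
      have : ∀ a ∈ m, (h ∘ g) a = (fun x => x) a := by
        intro a ha
        have hx : a ∈ s := Finset.mem_sym_iff.mp hm a ha
        rw [hs, Finset.mem_filter] at hx
        have hdiv : a.val / B = j := hx.2
        have hmod := Nat.div_add_mod a.val B
        rw [hdiv] at hmod
        have han : a.val ≤ n - 1 := by omega
        apply Fin.ext
        show min (j * B + a.val % B) (n - 1) = a.val
        rw [mul_comm j B, hmod]
        omega
      rw [Sym.map_congr this, Sym.map_id']
    intro m1 hm1 m2 hm2 heq
    have heq' : Sym.map g m1 = Sym.map g m2 := heq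
    have h1 := left_inv m1 hm1
    rw [heq', left_inv m2 hm2] at h1
    exact h1.symm
  have : (Finset.univ : Finset (Sym (Fin B) D)).card = (B + D - 1).choose D := by
    rw [Finset.card_univ, Sym.card_sym_fin_eq_multichoose, Nat.multichoose_eq]
  omega

lemma aux_pow_le_exp_mul_factorial (D : ℕ) :
    (D : ℝ) ^ D ≤ Real.exp 1 ^ D * D.factorial := by
  have h1 : (D : ℝ) ^ D / D.factorial ≤ Real.exp D := by
    refine le_trans ?_ (Real.sum_le_exp_of_nonneg (by positivity) (D + 1))
    exact Finset.single_le_sum (f := fun i => (D : ℝ) ^ i / i.factorial)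
      (fun i _ => by positivity) (Finset.self_mem_range_succ D)
  have h2 : Real.exp (D : ℝ) = Real.exp 1 ^ D := by
    rw [← Real.exp_nat_mul, mul_one]
  have hf : (0:ℝ) < D.factorial := by positivity
  rw [div_le_iff₀ hf] at h1
  rw [h2] at h1
  exact h1

lemma aux_final_eq (x dd DD nn : ℝ) (hd : 0 < dd) (hD : 0 < DD) (hx : 0 < x) (E : ℕ) :
    dd / DD * (4 * DD * nn / dd) ^ (E + 1) / (DD ^ (E + 1) / x ^ (E + 1))
      = (4 * x) ^ (E + 1) / DD * nn ^ (E + 1) / dd ^ E := by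
  field_simp
  have h1 : dd * dd⁻¹ = 1 := mul_inv_cancel₀ hd.ne'
  have h2 : dd ^ E * dd⁻¹ ^ E = 1 := by rw [← mul_pow, h1, one_pow]
  linear_combination (DD * DD ^ E * nn * nn ^ E * x * x ^ E * 4 ^ E * 4 * (dd ^ E * dd⁻¹ ^ E)) * h1 + (DD * DD ^ E * nn * nn ^ E * x * x ^ E * 4 ^ E * 4) * h2

/-- **Covering all size-`d` multisets by size-`D` multisets.**
Let `3 ≤ D ≤ d ≤ n`. There exist multisets `γ_1, …, γ_N` over `{1,…,n}`, each of size `D`,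
with `N ≤ ((4e)^D / D)·n^D/d^(D-1)`, such that every multiset of size `d` over `{1,…,n}`
contains some `γ_k` as a sub-multiset. -/
theorem cover_multisets_by_size_D
    (D d n : ℕ) (hD : 3 ≤ D) (hDd : D ≤ d) (hdn : d ≤ n) :
    ∃ (N : ℕ) (γ : Fin N → Multiset (Fin n)),
      (∀ k, Multiset.card (γ k) = D) ∧
      ((N : ℝ) ≤ (4 * Real.exp 1) ^ D / (D : ℝ) * (n : ℝ) ^ D / (d : ℝ) ^ (D - 1)) ∧
      (∀ α : Multiset (Fin n), Multiset.card α = d → ∃ k, γ k ≤ α) := by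
  classical
  obtain ⟨E, rfl⟩ : ∃ E, D = E + 1 := ⟨D - 1, by omega⟩
  set D := E + 1 with hDdef
  have hn0 : 0 < n := by omega
  set t := d / D with ht
  have ht1 : 1 ≤ t := (Nat.one_le_div_iff (by omega)).mpr hDd
  have htD : t * D ≤ d := by rw [ht, mul_comm]; exact Nat.mul_div_le d D
  set B := n / t + 1 with hBdef
  have hB0 : 0 < B := Nat.succ_pos _
  have hnt : n < t * B := by
    have h := Nat.lt_div_mul_add (a := n) (b := t) (by omega)
    rw [hBdef]; rw [mul_comm]
    calc n < n / t * t + t := h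
    _ = (n / t + 1) * t := by ring
  have hfib : ∀ x : Fin n, x.val / B < t := by
    intro x
    rw [Nat.div_lt_iff_lt_mul hB0]
    exact lt_trans x.isLt hnt
  set s : ℕ → Finset (Fin n) := fun j => Finset.univ.filter (fun x : Fin n => x.val / B = j)
    with hsdef
  set G : Finset (Sym (Fin n) D) := (Finset.range t).biUnion (fun j => (s j).sym D) with hG
  refine ⟨G.card, fun k => ((G.equivFin.symm k : G) : Sym (Fin n) D).val, ?_, ?_, ?_⟩
  · intro k
    exact ((G.equivFin.symm k : G) : Sym (Fin n) D).2
  · -- counting bound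
    set M := B + D - 1 with hM
    have hcard : G.card ≤ t * M.choose D := by
      refine le_trans (Finset.card_biUnion_le) ?_
      calc ∑ j ∈ Finset.range t, ((s j).sym D).card
          ≤ ∑ _j ∈ Finset.range t, M.choose D := by
            refine Finset.sum_le_sum (fun j _ => ?_)
            exact aux_sym_fiber_card_le n B j D hB0 hn0
        _ = t * M.choose D := by rw [Finset.sum_const, Finset.card_range, smul_eq_mul]
    -- real estimates
    have hD0 : (0:ℝ) < D := by positivity
    have hd0 : (0:ℝ) < d := by exact_mod_cast (by omega : 0 < d)
    have hn0' : (0:ℝ) < n := by exact_mod_cast hn0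
    have ht0 : (0:ℝ) < t := by exact_mod_cast ht1
    have hchoose : (M.choose D : ℝ) ≤ (M : ℝ) ^ D / D.factorial :=
      Nat.choose_le_pow_div D M
    have hd2t : (d : ℝ) ≤ 2 * D * t := by
      have h1 : d < t * D + D := by
        have := Nat.lt_div_mul_add (a := d) (b := D) (by omega)
        calc d < d / D * D + D := this
        _ = t * D + D := by rw [ht]
      have h2 : D ≤ t * D := Nat.le_mul_of_pos_left D (by omega)
      have h3 : d ≤ 2 * (t * D) := by
        have : d < t * D + t * D := lt_of_lt_of_le h1 (by omega)
        omega
      calc (d:ℝ) ≤ 2 * (t * D) := by exact_mod_cast h3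
      _ = 2 * D * t := by push_cast; ring
    have hMle : (M : ℝ) ≤ 4 * D * n / d := by
      have hMeq : M = n / t + D := by rw [hM, hBdef]; omega
      have h1 : (M : ℝ) = ((n / t : ℕ) : ℝ) + D := by rw [hMeq]; push_cast; ring
      have h2 : ((n / t : ℕ) : ℝ) ≤ (n : ℝ) / t := Nat.cast_div_le
      have h3 : (n : ℝ) / t ≤ 2 * D * n / d := by
        rw [div_le_div_iff₀ ht0 hd0]
        have : (n:ℝ) * d ≤ n * (2 * D * t) := by
          have hn0'' : (0:ℝ) ≤ n := le_of_lt hn0'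
          nlinarith [hd2t]
        calc (n:ℝ) * d ≤ n * (2 * D * t) := this
        _ = 2 * D * n * t := by ring
      have h4 : (D : ℝ) ≤ 2 * D * n / d := by
        rw [le_div_iff₀ hd0]
        have hdn' : (d:ℝ) ≤ n := by exact_mod_cast hdn
        nlinarith
      calc (M:ℝ) = ((n / t : ℕ) : ℝ) + D := h1
      _ ≤ (n:ℝ)/t + D := by linarith
      _ ≤ 2*D*n/d + 2*D*n/d := by linarith
      _ = 4 * D * n / d := by ring
    have htle : (t : ℝ) ≤ (d : ℝ) / D := by
      rw [le_div_iff₀ hD0]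
      exact_mod_cast htD
    have hfac : (D:ℝ)^D / Real.exp 1 ^ D ≤ (D.factorial : ℝ) := by
      rw [div_le_iff₀ (by positivity)]
      calc (D:ℝ)^D ≤ Real.exp 1 ^ D * D.factorial := aux_pow_le_exp_mul_factorial D
      _ = (D.factorial : ℝ) * Real.exp 1 ^ D := by ring
    have hM0 : (0:ℝ) ≤ (M:ℝ) := by positivity
    have step : (G.card : ℝ) ≤ ((d:ℝ)/D * (4 * D * n / d) ^ D) / ((D:ℝ)^D / Real.exp 1 ^ D) := by
      calc (G.card : ℝ) ≤ (t : ℝ) * (M.choose D : ℝ) := by exact_mod_cast hcard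
      _ ≤ (t : ℝ) * ((M : ℝ) ^ D / D.factorial) := by
          exact mul_le_mul_of_nonneg_left hchoose (le_of_lt ht0)
      _ = ((t:ℝ) * (M:ℝ)^D) / D.factorial := by ring
      _ ≤ ((d:ℝ)/D * (4 * D * n / d) ^ D) / ((D:ℝ)^D / Real.exp 1 ^ D) := by
          gcongr
    refine le_trans step (le_of_eq ?_)
    have hsimp : D - 1 = E := by omega
    rw [hsimp]
    exact aux_final_eq (Real.exp 1) (d:ℝ) (D:ℝ) (n:ℝ) hd0 hD0 (Real.exp_pos 1) E
  · intro α hα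
    set f : Fin n → ℕ := fun x => x.val / B with hf
    obtain ⟨j, hj⟩ : ∃ j, D ≤ (α.map f).count j := by
      by_contra hcon
      push_neg at hcon
      have hcard' : Multiset.card (α.map f) = d := by rw [Multiset.card_map, hα]
      have hsub : (α.map f).toFinset ⊆ Finset.range t := by
        intro j hjm
        rw [Multiset.mem_toFinset, Multiset.mem_map] at hjm
        obtain ⟨x, _, rfl⟩ := hjm
        exact Finset.mem_range.mpr (hfib x)
      have hsum := Multiset.toFinset_sum_count_eq (α.map f)
      have hle : ∑ j ∈ (α.map f).toFinset, (α.map f).count j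
          ≤ (α.map f).toFinset.card * E := by
        refine le_trans (Finset.sum_le_card_nsmul _ _ E (fun j _ => by
          have := hcon j; omega)) ?_
        simp
      have htf : (α.map f).toFinset.card ≤ t := by
        calc (α.map f).toFinset.card ≤ (Finset.range t).card := Finset.card_le_card hsub
        _ = t := Finset.card_range t
      have h6 : (α.map f).toFinset.card * E ≤ t * E := Nat.mul_le_mul_right E htf
      have h5 : t * E + t ≤ d := by
        calc t * E + t = t * (E + 1) := by ring
        _ ≤ d := htD
      have : d ≤ t * E := by omega
      have := le_trans this (by omega : t * E ≤ t * E)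
      omega
    set β := α.filter (fun x => j = f x) with hβ
    have hβcount : (α.map f).count j = Multiset.card β := Multiset.count_map f α j
    have hβD : D ≤ Multiset.card β := by omega
    set l := β.toList with hl
    have hlen : D ≤ l.length := by rw [hl, Multiset.length_toList]; exact hβD
    set γm : Multiset (Fin n) := ((l.take D : List (Fin n)) : Multiset (Fin n)) with hγm
    have hγle : γm ≤ β := by
      have h1 : γm ≤ (l : Multiset (Fin n)) :=
        Multiset.coe_le.mpr (List.take_sublist D l).subperm
      rwa [hl, Multiset.coe_toList] at h1
    have hγcard : Multiset.card γm = D := by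
      rw [hγm, Multiset.coe_card, List.length_take]
      omega
    have hjt : j < t := by
      have hpos : 0 < (α.map f).count j := by omega
      rw [Multiset.count_pos, Multiset.mem_map] at hpos
      obtain ⟨x, _, rfl⟩ := hpos
      exact hfib x
    have hσG : (Sym.mk γm hγcard : Sym (Fin n) D) ∈ G := by
      rw [hG, Finset.mem_biUnion]
      refine ⟨j, Finset.mem_range.mpr hjt, ?_⟩
      rw [Finset.mem_sym_iff]
      intro a ha
      have haβ : a ∈ β := Multiset.mem_of_le hγle ha
      rw [hβ, Multiset.mem_filter] at haβ
      rw [hsdef]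
      simp only [Finset.mem_filter, Finset.mem_univ, true_and]
      exact haβ.2.symm
    refine ⟨G.equivFin ⟨_, hσG⟩, ?_⟩
    simp only [Equiv.symm_apply_apply]
    exact le_trans hγle (Multiset.filter_le _ α)
end

section
/- Let M and A be real symmetric N × N matrices such that M·A = 0 (the zero matrix). If M − A is positive semidefinite, then M is positive semidefinite. -/
open Matrix

/-- **Killing a null-space component preserves positive semidefiniteness.**
If `M` and `A` are real symmetric `N × N` matrices with `M·A = 0` and `M - A` is positive
semidefinite, then `M` is positive semidefinite. -/
theorem posSemidef_of_sub_posSemidef_of_mul_eq_zero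
    (N : ℕ) (M A : Matrix (Fin N) (Fin N) ℝ)
    (hM : M.IsSymm) (hA : A.IsSymm)
    (h : M * A = 0) (hMA : (M - A).PosSemidef) :
    M.PosSemidef := by
  have hM' : M.IsHermitian := by
    rw [Matrix.IsHermitian, Matrix.conjTranspose_eq_transpose_of_trivial]; exact hM
  apply hM'.posSemidef_iff_eigenvalues_nonneg.mpr
  intro i
  set lam := hM'.eigenvalues i with hlam
  by_contra hneg
  push_neg at hneg
  set v : Fin N → ℝ := ⇑(hM'.eigenvectorBasis i) with hv
  have hMv : M *ᵥ v = lam • v := hM'.mulVec_eigenvectorBasis i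
  have hAM : A * M = 0 := by
    have := congrArg Matrix.transpose h
    rwa [Matrix.transpose_mul, hM.eq, hA.eq, Matrix.transpose_zero] at this
  have hAv : A *ᵥ v = 0 := by
    have h1 : A *ᵥ (M *ᵥ v) = 0 := by
      rw [Matrix.mulVec_mulVec, hAM, Matrix.zero_mulVec]
    rw [hMv, Matrix.mulVec_smul] at h1
    rcases smul_eq_zero.mp h1 with h2 | h2
    · exact absurd h2 (ne_of_lt hneg)
    · exact h2
  have hq := hMA.dotProduct_mulVec_nonneg v
  rw [Matrix.sub_mulVec, hMv, hAv, sub_zero] at hq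
  have hvv : star v ⬝ᵥ (lam • v) = lam * (v ⬝ᵥ v) := by
    simp [dotProduct_smul, star_trivial]
  rw [hvv] at hq
  have hvne : v ≠ 0 := by
    simpa [hv] using (hM'.eigenvectorBasis.orthonormal.ne_zero i)
  have hvpos : 0 < v ⬝ᵥ v := by
    have hsum : v ⬝ᵥ v = ∑ j, (v j)^2 := by simp [dotProduct, sq]
    rw [hsum]
    apply Finset.sum_pos'
    · intro j _; positivity
    · obtain ⟨j, hj⟩ := Function.ne_iff.mp hvne
      exact ⟨j, Finset.mem_univ j, pow_two_pos_of_ne_zero hj⟩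
  nlinarith [show lam < 0 from hneg]
end

section
/- Let h_k denote the probabilists' Hermite polynomials and let γ be the standard Gaussian measure on ℝ. For all k, ℓ ∈ ℕ and all c ∈ [0,1]: if ℓ ≤ k and k ≡ ℓ (mod 2), then ∫ h_k(c·g)·h_ℓ(g) dγ(g) = c^ℓ · (k! / ((k−ℓ)/2)!) · (−(1−c²)/2)^{(k−ℓ)/2}; otherwise (if ℓ > k or k and ℓ have different parities) ∫ h_k(c·g)·h_ℓ(g) dγ(g) = 0. -/
open MeasureTheory ProbabilityTheory

/-- The probabilists' Hermite polynomials (as real functions):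
`h_0 = 1`, `h_1 = x`, `h_{k+1}(x) = x·h_k(x) - k·h_{k-1}(x)`. -/
noncomputable def hermiteFn : ℕ → ℝ → ℝ
  | 0 => fun _ => 1
  | 1 => fun x => x
  | (k + 2) => fun x => x * hermiteFn (k + 1) x - (k + 1) * hermiteFn k x

namespace SHG
open Polynomial Real

/-- Hermite polynomials as real polynomials. -/
noncomputable def HP : ℕ → Polynomial ℝ
  | 0 => 1
  | 1 => X
  | (k + 2) => X * HP (k + 1) - C ((k : ℝ) + 1) * HP k

lemma HP_succ (l : ℕ) : HP (l + 1) = X * HP l - C (l : ℝ) * HP (l - 1) := by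
  cases l with
  | zero => simp [HP]
  | succ k => simp [HP]

theorem HP_deriv : (k : ℕ) → derivative (HP k) = C (k : ℝ) * HP (k - 1)
  | 0 => by simp [HP]
  | 1 => by simp [HP]
  | (k + 2) => by
    rw [show (HP (k+2)) = X * HP (k + 1) - C ((k : ℝ) + 1) * HP k from rfl]
    rw [derivative_sub, derivative_mul, derivative_mul, derivative_X, derivative_C,
      HP_deriv (k + 1), HP_deriv k]
    cases k with
    | zero =>
      simp only [HP, Nat.cast_zero, Nat.add_sub_cancel]
      simp [map_ofNat]
      rw [show HP 1 = (X : Polynomial ℝ) from rfl]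
      ring
    | succ m =>
      simp only [Nat.add_sub_cancel, Nat.succ_sub_one]
      rw [HP_succ (m + 1)]
      push_cast
      simp only [C_add, C_1, map_ofNat]
      ring

/-- The raw Gaussian-weight integral of a polynomial. -/
noncomputable def G (p : Polynomial ℝ) : ℝ := ∫ x : ℝ, p.eval x * Real.exp (-(x ^ 2 / 2))

lemma integrable_poly (p : Polynomial ℝ) :
    Integrable (fun x : ℝ => p.eval x * Real.exp (-(x ^ 2 / 2))) := by
  induction p using Polynomial.induction_on' with
  | add p q hp hq => simp only [eval_add, add_mul]; exact hp.add hq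
  | monomial n a =>
    have h0 : Integrable (fun x : ℝ => x ^ n * Real.exp (-(1/2 : ℝ) * x ^ 2)) := by
      have := integrable_rpow_mul_exp_neg_mul_sq (b := (1/2 : ℝ)) (by norm_num)
        (s := (n : ℝ)) (lt_of_lt_of_le neg_one_lt_zero (Nat.cast_nonneg n))
      simpa [Real.rpow_natCast] using this
    have h1 : Integrable (fun x : ℝ => x ^ n * Real.exp (-(x ^ 2 / 2))) := by
      refine h0.congr (Filter.Eventually.of_forall fun x => ?_)
      show x ^ n * Real.exp (-(1/2 : ℝ) * x ^ 2) = x ^ n * Real.exp (-(x ^ 2 / 2))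
      rw [show -(1/2 : ℝ) * x ^ 2 = -(x ^ 2 / 2) by ring]
    simpa [mul_assoc, mul_comm, mul_left_comm] using h1.const_mul a

lemma G_zero : G 0 = 0 := by simp [G]

lemma G_add (p q : Polynomial ℝ) : G (p + q) = G p + G q := by
  simp only [G, eval_add, add_mul]
  exact integral_add (integrable_poly p) (integrable_poly q)

lemma G_smul (r : ℝ) (p : Polynomial ℝ) : G (C r * p) = r * G p := by
  simp only [G, eval_mul, eval_C, mul_assoc]
  exact integral_const_mul r _

lemma G_sub (p q : Polynomial ℝ) : G (p - q) = G p - G q := by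
  have := G_add (p - q) q
  simp at this
  linarith

lemma G_IBP (p : Polynomial ℝ) : G (X * p) = G (derivative p) := by
  have key : ∫ x : ℝ, (derivative p - X * p).eval x * Real.exp (-(x ^ 2 / 2)) = 0 := by
    apply integral_eq_zero_of_hasDerivAt_of_integrable
      (f := fun x => p.eval x * Real.exp (-(x ^ 2 / 2)))
    · intro x
      have hp : HasDerivAt (fun x : ℝ => p.eval x) (p.derivative.eval x) x := p.hasDerivAt x
      have hin : HasDerivAt (fun x : ℝ => -(x ^ 2 / 2)) (-x) x := by
        have := ((hasDerivAt_pow 2 x).div_const 2).fun_neg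
        exact this.congr_deriv (by norm_num)
      have hexp : HasDerivAt (fun x : ℝ => Real.exp (-(x ^ 2 / 2)))
          (Real.exp (-(x ^ 2 / 2)) * (-x)) x := hin.exp
      have := hp.mul hexp
      refine this.congr_deriv ?_
      simp only [eval_sub, eval_mul, eval_X]
      ring
    · exact integrable_poly _
    · exact integrable_poly p
  have : G (derivative p - X * p) = 0 := key
  rw [G_sub] at this
  linarith

noncomputable def Mg (p : Polynomial ℝ) : ℝ := (Real.sqrt (2 * π))⁻¹ * G p

lemma integral_gauss_eq (p : Polynomial ℝ) :
    ∫ g, p.eval g ∂(gaussianReal 0 1) = Mg p := by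
  rw [gaussianReal_of_var_ne_zero 0 one_ne_zero]
  have hm : Measurable fun x : ℝ => (gaussianPDFReal 0 1 x).toNNReal :=
    (measurable_gaussianPDFReal 0 1).real_toNNReal
  have hd : gaussianPDF 0 1 = fun x => ((gaussianPDFReal 0 1 x).toNNReal : ENNReal) := rfl
  rw [hd, integral_withDensity_eq_integral_smul hm]
  have heq : ∀ x : ℝ, (gaussianPDFReal 0 1 x).toNNReal • p.eval x
      = (Real.sqrt (2 * π))⁻¹ * (p.eval x * Real.exp (-(x ^ 2 / 2))) := by
    intro x
    rw [NNReal.smul_def, Real.coe_toNNReal _ (gaussianPDFReal_nonneg 0 1 x)]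
    simp only [gaussianPDFReal, NNReal.coe_one, mul_one, sub_zero]
    rw [smul_eq_mul, show -x ^ 2 / (2:ℝ) = -(x ^ 2 / 2) by ring]
    ring
  simp_rw [heq]
  rw [integral_const_mul]
  rfl

lemma G_one : G (1 : Polynomial ℝ) = Real.sqrt (2 * π) := by
  have h := integral_gaussian (1/2 : ℝ)
  simp only [G, eval_one, one_mul]
  have : ∀ x : ℝ, Real.exp (-(x ^ 2 / 2)) = Real.exp (-(1/2 : ℝ) * x ^ 2) := by
    intro x; rw [show -(1/2 : ℝ) * x ^ 2 = -(x ^ 2 / 2) by ring]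
  simp_rw [this, h]
  rw [show π / (1/2 : ℝ) = 2 * π by ring]






lemma Mg_add (p q : Polynomial ℝ) : Mg (p + q) = Mg p + Mg q := by
  simp [Mg, G_add, mul_add]
lemma Mg_sub (p q : Polynomial ℝ) : Mg (p - q) = Mg p - Mg q := by
  simp [Mg, G_sub, mul_sub]
lemma Mg_smul (r : ℝ) (p : Polynomial ℝ) : Mg (C r * p) = r * Mg p := by
  simp [Mg, G_smul]; ring
lemma Mg_IBP (p : Polynomial ℝ) : Mg (X * p) = Mg (derivative p) := by
  simp [Mg, G_IBP]
lemma Mg_zero : Mg 0 = 0 := by simp [Mg, G_zero]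
lemma Mg_one : Mg 1 = 1 := by
  have h2 : (0:ℝ) < Real.sqrt (2 * π) := Real.sqrt_pos.mpr (by positivity)
  rw [Mg, G_one]
  exact inv_mul_cancel₀ h2.ne'

/-- key reduction: multiply by `HP (l+1)` ↦ differentiate. -/
lemma Mg_key (p : Polynomial ℝ) (l : ℕ) :
    Mg (p * HP (l + 1)) = Mg (derivative p * HP l) := by
  have h1 : p * HP (l + 1) = X * (p * HP l) - C (l : ℝ) * (p * HP (l - 1)) := by
    rw [HP_succ l]; ring
  rw [h1, Mg_sub, Mg_smul, Mg_IBP, derivative_mul, HP_deriv l, Mg_add,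
    show p * (C (l:ℝ) * HP (l-1)) = C (l:ℝ) * (p * HP (l-1)) by ring, Mg_smul]
  ring

/-- scaled Hermite polynomial -/
noncomputable def Pc (c : ℝ) (k : ℕ) : Polynomial ℝ := (HP k).comp (C c * X)

lemma Pc_deriv (c : ℝ) (k : ℕ) :
    derivative (Pc c k) = C (c * k) * Pc c (k - 1) := by
  rw [Pc, derivative_comp, HP_deriv k, mul_comp, C_comp, derivative_C_mul, derivative_X]
  simp only [Pc, mul_one, C_mul]
  ring

lemma rec1 (c : ℝ) (k l : ℕ) :
    Mg (Pc c k * HP (l + 1)) = c * k * Mg (Pc c (k - 1) * HP l) := by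
  rw [Mg_key, Pc_deriv, mul_assoc, Mg_smul]

lemma Pc_zero (c : ℝ) : Pc c 0 = 1 := by simp [Pc, HP]

lemma Mg_Pc_zero (c : ℝ) : Mg (Pc c 0) = 1 := by rw [Pc_zero, Mg_one]

lemma Mg_Pc_one (c : ℝ) : Mg (Pc c 1) = 0 := by
  have : Pc c 1 = C c * X := by simp [Pc, HP]
  rw [this, Mg_smul]
  have : Mg X = 0 := by
    have := Mg_IBP (1 : Polynomial ℝ)
    simpa [Mg_zero] using this
  rw [this, mul_zero]

lemma rec2 (c : ℝ) (k : ℕ) :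
    Mg (Pc c (k + 2)) = (k + 1) * (c ^ 2 - 1) * Mg (Pc c k) := by
  have h1 : Pc c (k + 2) = C c * X * Pc c (k + 1) - C ((k:ℝ) + 1) * Pc c k := by
    simp only [Pc, show HP (k+2) = X * HP (k + 1) - C ((k : ℝ) + 1) * HP k from rfl,
      sub_comp, mul_comp, X_comp, C_comp]
  rw [h1, Mg_sub, show C c * X * Pc c (k+1) = C c * (X * Pc c (k+1)) by ring, Mg_smul,
    Mg_IBP, Pc_deriv, Mg_smul, show (C ((k:ℝ)+1)) * Pc c k = C ((k:ℝ)+1) * Pc c k from rfl,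
    Mg_smul]
  simp only [Nat.add_sub_cancel]
  push_cast
  ring

lemma Mg_Pc_odd (c : ℝ) : ∀ m, Mg (Pc c (2 * m + 1)) = 0
  | 0 => Mg_Pc_one c
  | (m + 1) => by
    rw [show 2 * (m + 1) + 1 = (2 * m + 1) + 2 by ring, rec2, Mg_Pc_odd c m, mul_zero]

lemma Mg_Pc_even (c : ℝ) : ∀ m, Mg (Pc c (2 * m)) =
    ((2 * m).factorial : ℝ) / (m.factorial : ℝ) * ((c ^ 2 - 1) / 2) ^ m
  | 0 => by simp [Mg_Pc_zero]
  | (m + 1) => by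
    rw [show 2 * (m + 1) = 2 * m + 2 by ring, rec2, Mg_Pc_even c m]
    rw [show 2 * m + 2 = (2 * m + 1) + 1 by ring]
    rw [Nat.factorial_succ, Nat.factorial_succ, Nat.factorial_succ]
    push_cast
    have h1 : (m.factorial : ℝ) ≠ 0 := Nat.cast_ne_zero.mpr m.factorial_ne_zero
    have h2 : ((2 * m).factorial : ℝ) ≠ 0 := Nat.cast_ne_zero.mpr (2 * m).factorial_ne_zero
    field_simp
    ring

/-- the master formula -/
lemma Mg_main (c : ℝ) : ∀ l k, Mg (Pc c k * HP l) =
    if l ≤ k then c ^ l * ((k.factorial : ℝ) / ((k - l).factorial : ℝ)) * Mg (Pc c (k - l))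
    else 0
  | 0, k => by
    rw [show HP 0 = 1 from rfl, mul_one, if_pos (Nat.zero_le k), Nat.sub_zero, pow_zero,
      div_self (Nat.cast_ne_zero.mpr k.factorial_ne_zero), one_mul, one_mul]
  | (l + 1), 0 => by
    rw [show Pc c 0 * HP (l + 1) = 1 * HP (l + 1) by rw [Pc_zero], Mg_key]
    simp [Mg_zero]
  | (l + 1), (k + 1) => by
    rw [rec1, Nat.add_sub_cancel, Mg_main c l k]
    by_cases h : l ≤ k
    · rw [if_pos h, if_pos (Nat.succ_le_succ h), Nat.succ_sub_succ]
      rw [Nat.factorial_succ]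
      push_cast
      ring
    · rw [if_neg h, if_neg (fun hh => h (Nat.le_of_succ_le_succ hh)), mul_zero]

theorem hermiteFn_eval : (k : ℕ) → ∀ x : ℝ, hermiteFn k x = (HP k).eval x
  | 0 => fun x => by simp [hermiteFn, HP]
  | 1 => fun x => by simp [hermiteFn, HP]
  | (k + 2) => fun x => by
    rw [show hermiteFn (k+2) x = x * hermiteFn (k + 1) x - (k + 1) * hermiteFn k x from rfl,
      hermiteFn_eval (k + 1) x, hermiteFn_eval k x,
      show HP (k+2) = X * HP (k + 1) - C ((k : ℝ) + 1) * HP k from rfl]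
    simp [eval_sub, eval_mul]


end SHG

open SHG in
/-- **Gaussian inner product of a scaled Hermite polynomial with a Hermite polynomial.**
For `c ∈ [0,1]`: if `ℓ ≤ k` and `k ≡ ℓ (mod 2)` then
`∫ h_k(c·g)·h_ℓ(g) dγ(g) = c^ℓ · (k!/((k-ℓ)/2)!) · (-(1-c²)/2)^((k-ℓ)/2)`,
and otherwise the integral vanishes. -/
theorem scaled_hermite_gaussian_coefficient
    (k l : ℕ) (c : ℝ) (hc0 : 0 ≤ c) (hc1 : c ≤ 1) :
    ((l ≤ k ∧ k % 2 = l % 2) →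
      (∫ g, hermiteFn k (c * g) * hermiteFn l g ∂(gaussianReal 0 1)) =
        c ^ l * ((k.factorial : ℝ) / (((k - l) / 2).factorial : ℝ)) *
          (-((1 - c ^ 2) / 2)) ^ ((k - l) / 2)) ∧
    (¬ (l ≤ k ∧ k % 2 = l % 2) →
      (∫ g, hermiteFn k (c * g) * hermiteFn l g ∂(gaussianReal 0 1)) = 0) := by
  have hint : (∫ g, hermiteFn k (c * g) * hermiteFn l g ∂(gaussianReal 0 1))
      = Mg (Pc c k * HP l) := by
    rw [← integral_gauss_eq]
    congr 1
    funext g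
    rw [hermiteFn_eval k (c * g), hermiteFn_eval l g]
    simp [Pc, Polynomial.eval_comp]
  constructor
  · rintro ⟨hle, hmod⟩
    set m := (k - l) / 2 with hm
    have heven : Even (k - l) := by
      rw [Nat.even_sub hle]
      simp [Nat.even_iff, hmod]
    have h2m : k - l = 2 * m := by
      rw [hm, Nat.two_mul_div_two_of_even heven]
    rw [hint, Mg_main c l k, if_pos hle, h2m, Mg_Pc_even c m]
    have hfac : ((2 * m).factorial : ℝ) ≠ 0 := Nat.cast_ne_zero.mpr (2*m).factorial_ne_zero
    have hfac2 : (m.factorial : ℝ) ≠ 0 := Nat.cast_ne_zero.mpr m.factorial_ne_zero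
    rw [show (-((1 - c ^ 2) / 2)) = (c ^ 2 - 1) / 2 by ring]
    field_simp
  · intro hn
    rw [hint, Mg_main c l k]
    by_cases hle : l ≤ k
    · have hmod : ¬ (k % 2 = l % 2) := fun h => hn ⟨hle, h⟩
      have h1 : (k - l) % 2 = 1 := by omega
      obtain ⟨m, hm⟩ := Nat.odd_iff.mpr h1
      rw [if_pos hle, hm, Mg_Pc_odd c m, mul_zero]
    · rw [if_neg hle]
end

section
/- Let e, n be positive integers with e ≤ n. The number of functions α : {1,…,n} × {1,…,n} → ℕ with Σ_{i,j} α(i,j) = e such that for every i ∈ {1,…,n} the quantity Σ_{j=1}^n (α(i,j) + α(j,i)) is even, is at most (8n)^e. -/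
open Finset

namespace EvenCount

variable {n : ℕ}

def deg (α : Fin n × Fin n → ℕ) (i : Fin n) : ℕ := ∑ j : Fin n, (α (i, j) + α (j, i))

def ind (p : Fin n × Fin n) : Fin n × Fin n → ℕ := fun q => if q = p then 1 else 0

def wf (s : Fin n) : List (Bool × Fin n) → (Fin n × Fin n → ℕ)
  | [] => 0
  | (b, v) :: l => ind (if b then (s, v) else (v, s)) + wf v l

def ev (s : Fin n) : List (Bool × Fin n) → Fin n
  | [] => s
  | (_, v) :: l => ev v l

lemma deg_add (α β : Fin n × Fin n → ℕ) (i : Fin n) :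
    deg (α + β) i = deg α i + deg β i := by
  simp only [deg, Pi.add_apply]
  rw [← Finset.sum_add_distrib]
  exact Finset.sum_congr rfl fun _ _ => by ring

lemma sum_ind (p : Fin n × Fin n) : ∑ q : Fin n × Fin n, ind p q = 1 := by
  simp [ind, Finset.sum_ite_eq']

lemma deg_ind (p : Fin n × Fin n) (i : Fin n) :
    deg (ind p) i = (if p.1 = i then 1 else 0) + (if p.2 = i then 1 else 0) := by
  rcases p with ⟨a, b⟩
  simp only [deg, ind]
  rw [Finset.sum_add_distrib]
  have h1 : (∑ j : Fin n, if (i, j) = (a, b) then 1 else 0) = (if a = i then 1 else 0) := by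
    simp only [Prod.mk.injEq, ite_and]
    rcases eq_or_ne a i with h | h
    · subst h; simp [Finset.sum_ite_eq']
    · rw [if_neg h]
      refine Finset.sum_eq_zero fun j _ => ?_
      rw [if_neg (fun hh => h hh.symm)]
  have h2 : (∑ j : Fin n, if (j, i) = (a, b) then 1 else 0) = (if b = i then 1 else 0) := by
    simp only [Prod.mk.injEq, ite_and]
    rcases eq_or_ne b i with h | h
    · subst h; simp [Finset.sum_ite_eq']
    · rw [if_neg h]
      refine Finset.sum_eq_zero fun j _ => ?_
      split_ifs with h1' h2'
      · exact absurd h2'.symm h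
      · rfl
      · rfl
  rw [h1, h2]

lemma sum_wf (l : List (Bool × Fin n)) : ∀ s : Fin n, ∑ p : Fin n × Fin n, wf s l p = l.length := by
  induction l with
  | nil => intro s; simp [wf]
  | cons x l ih =>
    rcases x with ⟨b, v⟩
    intro s
    simp only [wf, Pi.add_apply]
    rw [Finset.sum_add_distrib, sum_ind, ih v]
    simp [Nat.add_comm]

lemma wf_append (l₁ l₂ : List (Bool × Fin n)) : ∀ s,
    wf s (l₁ ++ l₂) = wf s l₁ + wf (ev s l₁) l₂ := by
  induction l₁ with
  | nil => intro s; simp [wf, ev]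
  | cons x l ih =>
    rcases x with ⟨b, v⟩
    intro s
    simp only [List.cons_append, wf, ev]
    rw [ih v, add_assoc]

lemma deg_wf_parity (l : List (Bool × Fin n)) : ∀ (s : Fin n) (i : Fin n),
    ((deg (wf s l) i : ℕ) : ZMod 2)
      = (if s = i then 1 else 0) + (if ev s l = i then 1 else 0) := by
  induction l with
  | nil =>
    intro s i
    simp only [wf, ev, deg]
    norm_num
    by_cases h : s = i <;> simp [h, ev] <;> decide
  | cons x l ih =>
    rcases x with ⟨b, v⟩
    intro s i
    simp only [wf, ev]
    rw [deg_add]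
    push_cast
    rw [ih v i]
    have h2 : ((1 : ZMod 2) + 1) = 0 := by decide
    cases b <;>
    · rw [deg_ind]
      push_cast
      split_ifs <;> simp_all <;> decide

lemma ev_append (l₁ l₂ : List (Bool × Fin n)) : ∀ s,
    ev s (l₁ ++ l₂) = ev (ev s l₁) l₂ := by
  induction l₁ with
  | nil => intro s; simp [ev]
  | cons x l ih =>
    rcases x with ⟨b, v⟩
    intro s
    simp only [List.cons_append, ev]
    exact ih v

lemma ev_getLast (l : List (Bool × Fin n)) : ∀ s (h : l ≠ []), ev s l = (l.getLast h).2 := by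
  induction l with
  | nil => intro s h; exact absurd rfl h
  | cons x l ih =>
    rcases x with ⟨b, v⟩
    intro s h
    rcases eq_or_ne l [] with rfl | hl
    · simp [ev]
    · simp only [ev]
      rw [ih v hl, List.getLast_cons hl]

lemma even_deg_closed (l : List (Bool × Fin n)) (s : Fin n) (hc : ev s l = s) (i : Fin n) :
    Even (deg (wf s l) i) := by
  rw [even_iff_two_dvd, ← ZMod.natCast_eq_zero_iff]
  rw [deg_wf_parity l s i, hc]
  split_ifs <;> decide

/-- In a graph with all degrees even and at least one edge, there is a nonempty
closed walk whose edge multiset is contained in the graph. -/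
lemma exists_closed_walk (α : Fin n × Fin n → ℕ) (hev : ∀ i, Even (deg α i))
    (p₀ : Fin n × Fin n) (hp₀ : 0 < α p₀) :
    ∃ (s : Fin n) (l : List (Bool × Fin n)), l ≠ [] ∧ ev s l = s ∧ ∀ p, wf s l p ≤ α p := by
  classical
  set s := p₀.1 with hs
  set E := ∑ p : Fin n × Fin n, α p with hE
  have hE1 : 1 ≤ E := by
    calc 1 ≤ α p₀ := hp₀
    _ ≤ E := Finset.single_le_sum (f := α) (fun _ _ => Nat.zero_le _) (Finset.mem_univ p₀)
  set Q : ℕ → Prop := fun m => ∃ l : List (Bool × Fin n), l.length = m ∧ l ≠ [] ∧ ∀ p, wf s l p ≤ α p with hQ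
  have hQ1 : Q 1 := by
    refine ⟨[(true, p₀.2)], rfl, by simp, fun p => ?_⟩
    simp only [wf, ind, if_true, Pi.add_apply, Pi.zero_apply]
    have : (s, p₀.2) = p₀ := by rw [hs]
    rw [this]
    rcases eq_or_ne p p₀ with rfl | h
    · have := hp₀; simp at this ⊢; omega
    · simp [h]
  -- lengths of valid walks are bounded by E
  have hbd : ∀ m, Q m → m ≤ E := by
    rintro m ⟨l, rfl, -, hle⟩
    rw [← sum_wf l s, hE]
    exact Finset.sum_le_sum fun p _ => hle p
  set m := Nat.findGreatest Q E with hm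
  have hQm : Q m := Nat.findGreatest_spec hE1 hQ1
  obtain ⟨l, hlen, hne, hle⟩ := hQm
  refine ⟨s, l, hne, ?_, hle⟩
  by_contra hz
  set z := ev s l with hzdef
  -- degree of z in the walk is odd, in α it is even, so some edge at z is unused
  have hodd : ¬ Even (deg (wf s l) z) := by
    rw [even_iff_two_dvd, ← ZMod.natCast_eq_zero_iff, deg_wf_parity l s z]
    rw [if_neg (fun h => hz h.symm), if_pos rfl]
    decide
  have hex : ∃ j, wf s l (z, j) < α (z, j) ∨ wf s l (j, z) < α (j, z) := by
    by_contra hcon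
    push_neg at hcon
    have : deg (wf s l) z = deg α z := by
      refine Finset.sum_congr rfl fun j _ => ?_
      have h1 := (hcon j).1
      have h2 := (hcon j).2
      have h3 := hle (z, j)
      have h4 := hle (j, z)
      omega
    exact hodd (this ▸ hev z)
  obtain ⟨j, hj⟩ := hex
  -- extend the walk by one more step, contradicting maximality
  have hstep : ∃ b : Bool, ∀ p, (wf s l + ind (if b then (z, j) else (j, z))) p ≤ α p := by
    rcases hj with hj | hj
    · refine ⟨true, fun p => ?_⟩
      simp only [if_true, Pi.add_apply, ind]
      rcases eq_or_ne p (z, j) with rfl | h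
      · simpa using hj
      · simpa [h] using hle p
    · refine ⟨false, fun p => ?_⟩
      simp only [if_false, Pi.add_apply, ind]
      rcases eq_or_ne p (j, z) with rfl | h
      · simpa using hj
      · simpa [h] using hle p
  obtain ⟨b, hb⟩ := hstep
  have hQ' : Q (m + 1) := by
    refine ⟨l ++ [(b, j)], by simpa using hlen, by simp, fun p => ?_⟩
    rw [wf_append]
    simp only [wf, ← hzdef]
    have : ind (if b then (z, j) else (j, z)) + 0 = ind (if b then (z, j) else (j, z)) := by simp
    rw [this]
    exact hb p
  have hmax : m + 1 ≤ E := hbd _ hQ'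
  exact Nat.findGreatest_is_greatest (Nat.lt_succ_self m) hmax hQ'

def S (n e : ℕ) : Set (Fin n × Fin n → ℕ) :=
  {α : Fin n × Fin n → ℕ |
      (∑ p : Fin n × Fin n, α p) = e ∧
      ∀ i : Fin n, Even (∑ j : Fin n, (α (i, j) + α (j, i)))}

lemma S_finite (n e : ℕ) : (S n e).Finite := by
  have h : S n e ⊆ Set.pi Set.univ (fun _ : Fin n × Fin n => Set.Iic e) := by
    rintro α ⟨hsum, -⟩ p -
    calc α p ≤ ∑ q : Fin n × Fin n, α q :=
      Finset.single_le_sum (f := α) (fun _ _ => Nat.zero_le _) (Finset.mem_univ p)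
    _ = e := hsum
  exact (Set.Finite.pi fun _ => Set.finite_Iic e).subset h

noncomputable def SF (n e : ℕ) : Finset (Fin n × Fin n → ℕ) := (S_finite n e).toFinset

lemma mem_SF {e : ℕ} {α : Fin n × Fin n → ℕ} : α ∈ SF n e ↔ α ∈ S n e :=
  Set.Finite.mem_toFinset _

lemma geom : ∀ e : ℕ, (∑ k ∈ Finset.range e, 2 ^ (k + 1) * 4 ^ (e - (k + 1))) + 2 ^ e = 4 ^ e := by
  intro e
  induction e with
  | zero => simp
  | succ e ih =>
    rw [Finset.sum_range_succ]
    have h : ∀ k ∈ Finset.range e,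
        2 ^ (k + 1) * 4 ^ (e + 1 - (k + 1)) = 4 * (2 ^ (k + 1) * 4 ^ (e - (k + 1))) := by
      intro k hk
      have hk' := Finset.mem_range.mp hk
      have h2 : e + 1 - (k + 1) = (e - (k + 1)) + 1 := by omega
      rw [h2, pow_succ]; ring
    rw [Finset.sum_congr rfl h, ← Finset.mul_sum]
    have h4 : (4:ℕ) ^ (e + 1) = 4 * 4 ^ e := by rw [pow_succ]; ring
    have h2 : (2:ℕ) ^ (e + 1) = 2 * 2 ^ e := by rw [pow_succ]; ring
    simp only [Nat.sub_self, pow_zero, mul_one]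
    omega

lemma card_SF (n : ℕ) : ∀ e : ℕ, (SF n e).card ≤ (4 * n) ^ e := by
  intro e
  induction e using Nat.strong_induction_on with
  | _ e IH =>
    classical
    rcases e with _ | e'
    · -- e = 0 : only the zero function
      have h : SF n 0 ⊆ {0} := by
        intro α hα
        rw [mem_SF] at hα
        obtain ⟨hsum, -⟩ := hα
        have : ∀ p, α p = 0 := by
          intro p
          have := Finset.sum_eq_zero_iff.mp hsum p (Finset.mem_univ p)
          exact this
        simp only [Finset.mem_singleton]
        funext p; exact this p
      calc (SF n 0).card ≤ ({0} : Finset (Fin n × Fin n → ℕ)).card := Finset.card_le_card h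
      _ = 1 := Finset.card_singleton _
      _ ≤ (4 * n) ^ 0 := by simp
    · set e := e' + 1 with he
      -- the covering family
      set T : (k : ℕ) → (Fin (k + 1) → Bool × Fin n) → Finset (Fin n × Fin n → ℕ) :=
        fun k f => (SF n (e - (k + 1))).image
          (fun β => β + wf (f (Fin.last k)).2 (List.ofFn f)) with hT
      have hcover : SF n e ⊆ (Finset.range e).biUnion
          (fun k => (Finset.univ : Finset (Fin (k + 1) → Bool × Fin n)).biUnion (T k)) := by
        intro α hα
        rw [mem_SF] at hα
        obtain ⟨hsum, hev⟩ := hα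
        have hdeg : ∀ i, Even (deg α i) := hev
        have hp₀ : ∃ p₀, 0 < α p₀ := by
          by_contra hcon
          push_neg at hcon
          have : ∑ p : Fin n × Fin n, α p = 0 :=
            Finset.sum_eq_zero fun p _ => Nat.le_zero.mp (hcon p)
          omega
        obtain ⟨p₀, hp₀⟩ := hp₀
        obtain ⟨s, l, hne, hcl, hle⟩ := exists_closed_walk α hdeg p₀ hp₀
        -- walk length k+1
        obtain ⟨k, hk⟩ : ∃ k, l.length = k + 1 := by
          rcases l with _ | ⟨x, l⟩
          · exact absurd rfl hne
          · exact ⟨l.length, by simp⟩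
        have hkle : k + 1 ≤ e := by
          have h1 : ∑ p : Fin n × Fin n, wf s l p ≤ ∑ p : Fin n × Fin n, α p :=
            Finset.sum_le_sum fun p _ => hle p
          rw [sum_wf, hsum, hk] at h1
          exact h1
        set f : Fin (k + 1) → Bool × Fin n := fun i => l.get (Fin.cast hk.symm i) with hf
        have hofn : List.ofFn f = l := by
          apply List.ext_getElem
          · simp [hk]
          · intro i h1 h2
            rw [List.getElem_ofFn]
            simp [hf]
        have hlast : (f (Fin.last k)).2 = s := by
          have h1 : f (Fin.last k) = l.getLast hne := by
            rw [List.getLast_eq_getElem]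
            simp [hf, Fin.cast]
            congr 1
            omega
          rw [h1, ← ev_getLast l s hne, hcl]
        set β : Fin n × Fin n → ℕ := fun p => α p - wf s l p with hβ
        have hβα : β + wf s l = α := by
          funext p
          have := hle p
          simp only [hβ, Pi.add_apply]
          omega
        have hβmem : β ∈ SF n (e - (k + 1)) := by
          rw [mem_SF]
          constructor
          · have h1 : (∑ p : Fin n × Fin n, β p) + (∑ p : Fin n × Fin n, wf s l p)
                = ∑ p : Fin n × Fin n, α p := by
              rw [← Finset.sum_add_distrib]
              exact Finset.sum_congr rfl fun p _ => by
                have := hle p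
                simp only [hβ]
                omega
            rw [sum_wf, hsum, hk] at h1
            omega
          · intro i
            have h1 : deg β i + deg (wf s l) i = deg α i := by
              rw [← deg_add, hβα]
            have h2 := even_deg_closed l s hcl i
            have h3 := hdeg i
            have h2' : Even (deg (wf s l) i) := h2
            rcases h2' with ⟨a, ha⟩
            rcases h3 with ⟨b, hb⟩
            exact ⟨b - a, by simp only [deg] at h1 ha hb ⊢; omega⟩
        rw [Finset.mem_biUnion]
        refine ⟨k, Finset.mem_range.mpr (by omega), ?_⟩
        rw [Finset.mem_biUnion]
        refine ⟨f, Finset.mem_univ f, ?_⟩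
        rw [hT]
        rw [Finset.mem_image]
        exact ⟨β, hβmem, by rw [hlast, hofn, hβα]⟩
      -- count
      have hcards : (SF n e).card ≤
          ∑ k ∈ Finset.range e, (2 * n) ^ (k + 1) * (4 * n) ^ (e - (k + 1)) := by
        calc (SF n e).card ≤ _ := Finset.card_le_card hcover
        _ ≤ ∑ k ∈ Finset.range e, ((Finset.univ :
              Finset (Fin (k + 1) → Bool × Fin n)).biUnion (T k)).card :=
          Finset.card_biUnion_le
        _ ≤ ∑ k ∈ Finset.range e, (2 * n) ^ (k + 1) * (4 * n) ^ (e - (k + 1)) := by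
          refine Finset.sum_le_sum fun k hk => ?_
          calc ((Finset.univ : Finset (Fin (k + 1) → Bool × Fin n)).biUnion (T k)).card
              ≤ ∑ f : Fin (k + 1) → Bool × Fin n, (T k f).card := Finset.card_biUnion_le
          _ ≤ ∑ _f : Fin (k + 1) → Bool × Fin n, (4 * n) ^ (e - (k + 1)) := by
              refine Finset.sum_le_sum fun f _ => ?_
              calc (T k f).card ≤ (SF n (e - (k + 1))).card := Finset.card_image_le
              _ ≤ (4 * n) ^ (e - (k + 1)) := IH _ (by have := Finset.mem_range.mp hk; omega)
          _ = (2 * n) ^ (k + 1) * (4 * n) ^ (e - (k + 1)) := by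
              rw [Finset.sum_const, smul_eq_mul]
              congr 1
              rw [Finset.card_univ, Fintype.card_fun]
              simp [mul_comm]
      refine hcards.trans ?_
      have hterm : ∀ k ∈ Finset.range e, (2 * n) ^ (k + 1) * (4 * n) ^ (e - (k + 1))
          = 2 ^ (k + 1) * 4 ^ (e - (k + 1)) * n ^ e := by
        intro k hk
        have hk' := Finset.mem_range.mp hk
        rw [mul_pow, mul_pow]
        have : n ^ (k + 1) * n ^ (e - (k + 1)) = n ^ e := by
          rw [← pow_add]
          congr 1
          omega
        calc 2 ^ (k + 1) * n ^ (k + 1) * (4 ^ (e - (k + 1)) * n ^ (e - (k + 1)))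
            = 2 ^ (k + 1) * 4 ^ (e - (k + 1)) * (n ^ (k + 1) * n ^ (e - (k + 1))) := by ring
        _ = 2 ^ (k + 1) * 4 ^ (e - (k + 1)) * n ^ e := by rw [this]
      rw [Finset.sum_congr rfl hterm, ← Finset.sum_mul]
      have hg := geom e
      calc (∑ k ∈ Finset.range e, 2 ^ (k + 1) * 4 ^ (e - (k + 1))) * n ^ e
          ≤ 4 ^ e * n ^ e := by
            exact Nat.mul_le_mul_right _ (Nat.le.intro hg)
      _ = (4 * n) ^ e := by rw [mul_pow]

end EvenCount


/-- **Counting directed multigraphs with all degrees even.**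
For `0 < e ≤ n`, the number of functions `α : {1,…,n}² → ℕ` with total edge count `e` such
that every vertex has even total degree (self-loops counted twice) is at most `(8n)^e`. -/
theorem count_even_degree_multigraphs (e n : ℕ) (he : 0 < e) (hen : e ≤ n) :
    {α : Fin n × Fin n → ℕ |
        (∑ p : Fin n × Fin n, α p) = e ∧
        ∀ i : Fin n, Even (∑ j : Fin n, (α (i, j) + α (j, i)))}.Finite ∧
    {α : Fin n × Fin n → ℕ |
        (∑ p : Fin n × Fin n, α p) = e ∧
        ∀ i : Fin n, Even (∑ j : Fin n, (α (i, j) + α (j, i)))}.ncard ≤ (8 * n) ^ e := by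
  refine ⟨EvenCount.S_finite n e, ?_⟩
  have h1 : (EvenCount.S n e).ncard = (EvenCount.SF n e).card := by
    rw [← Set.ncard_coe_finset]
    congr 1
    exact (Set.Finite.coe_toFinset _).symm
  show (EvenCount.S n e).ncard ≤ (8 * n) ^ e
  rw [h1]
  calc (EvenCount.SF n e).card ≤ (4 * n) ^ e := EvenCount.card_SF n e
  _ ≤ (8 * n) ^ e := Nat.pow_le_pow_left (by omega) e
end

section
/- There is an absolute constant C > 0 such that the following holds for all integers D > 2 and e, n ≥ 1 with D·e ≤ 2n. If D·e is even, then the number of functions α : {1,…,n}^D → ℕ with Σ_t α(t) = e such that for every i ∈ {1,…,n} the total degree Σ_t α(t)·(number of coordinates of the tuple t equal to i) is even, is at most (C·D·n)^{D·e/2} · e^{(D/2 − 1)·e}. If D·e is odd, there are no such functions. -/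
open Finset

lemma two_pow_le_two_mul_factorial : ∀ j : ℕ, 2 ^ j ≤ 2 * j.factorial
  | 0 => by norm_num
  | 1 => by norm_num
  | (j+2) => by
      have ih := two_pow_le_two_mul_factorial (j+1)
      rw [pow_succ, Nat.factorial_succ]
      have h2 : 2 ≤ j + 2 := by omega
      calc 2 ^ (j+1) * 2 ≤ 2 * (j+1).factorial * 2 := by omega
        _ = 2 * (2 * (j+1).factorial) := by ring
        _ ≤ 2 * ((j+2) * (j+1).factorial) :=
            Nat.mul_le_mul_left _ (Nat.mul_le_mul_right _ h2)

lemma sum_range_two_pow_le (k : ℕ) : ∑ j ∈ range k, 2 ^ j ≤ 2 ^ k := by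
  induction k with
  | zero => simp
  | succ k ih =>
      rw [Finset.sum_range_succ, pow_succ]
      omega

lemma succ_pow_le_four_mul (k : ℕ) : (k+1)^k ≤ 4 * k^k := by
  rcases Nat.eq_zero_or_pos k with rfl | hk
  · norm_num
  have h1 : (k+1)^k * 2^k ≤ 4 * k^k * 2^k := by
    have hexp : ((k:ℕ)+1)^k = ∑ j ∈ range (k+1), k ^ j * 1 ^ (k - j) * k.choose j :=
      add_pow k 1 k
    rw [hexp, Finset.sum_mul]
    have hterm : ∀ j ∈ range (k+1), k ^ j * 1 ^ (k-j) * k.choose j * 2 ^ k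
        ≤ 2 * k^k * 2^j := by
      intro j hj
      have hjk : j ≤ k := by simpa using Nat.lt_succ_iff.mp (mem_range.mp hj)
      have h2k : (2:ℕ)^k = 2^(k-j) * 2^j := by rw [← pow_add]; congr 1; omega
      have hcj : k.choose j * 2 ^ (k-j) ≤ 2 * k ^ (k-j) := by
        calc k.choose j * 2 ^ (k-j) ≤ k.choose j * (2 * (k-j).factorial) :=
              Nat.mul_le_mul_left _ (two_pow_le_two_mul_factorial (k-j))
          _ = 2 * ((k-j).factorial * k.choose (k - j)) := by rw [Nat.choose_symm hjk]; ring
          _ = 2 * k.descFactorial (k-j) := by rw [Nat.descFactorial_eq_factorial_mul_choose]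
          _ ≤ 2 * k ^ (k-j) := Nat.mul_le_mul_left _ (Nat.descFactorial_le_pow _ _)
      calc k ^ j * 1 ^ (k-j) * k.choose j * 2 ^ k
          = (k.choose j * 2^(k-j)) * k^j * 2^j := by rw [h2k]; ring
        _ ≤ (2 * k^(k-j)) * k^j * 2^j := by
            exact Nat.mul_le_mul_right _ (Nat.mul_le_mul_right _ hcj)
        _ = 2 * (k^(k-j) * k^j) * 2^j := by ring
        _ = 2 * k^k * 2^j := by rw [← pow_add]; congr 3; omega
    calc ∑ j ∈ range (k+1), k ^ j * 1 ^ (k - j) * k.choose j * 2 ^ k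
        ≤ ∑ j ∈ range (k+1), 2 * k^k * 2^j := Finset.sum_le_sum hterm
      _ = 2 * k^k * ∑ j ∈ range (k+1), 2^j := by rw [Finset.mul_sum]
      _ ≤ 2 * k^k * 2^(k+1) := Nat.mul_le_mul_left _ (sum_range_two_pow_le (k+1))
      _ = 4 * k^k * 2^k := by ring
  exact Nat.le_of_mul_le_mul_right h1 (pow_pos (by norm_num) k)

lemma pow_self_le_four_pow_mul_factorial : ∀ f : ℕ, f ^ f ≤ 4 ^ f * f.factorial
  | 0 => by norm_num
  | (k+1) => by
      have ih := pow_self_le_four_pow_mul_factorial k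
      calc (k+1)^(k+1) = (k+1) * (k+1)^k := by ring
        _ ≤ (k+1) * (4 * k^k) := Nat.mul_le_mul_left _ (succ_pow_le_four_mul k)
        _ ≤ (k+1) * (4 * (4^k * k.factorial)) := by
            exact Nat.mul_le_mul_left _ (Nat.mul_le_mul_left _ ih)
        _ = 4^(k+1) * ((k+1) * k.factorial) := by ring
        _ = 4^(k+1) * (k+1).factorial := by rw [Nat.factorial_succ]


variable {n : ℕ}

def ewP {m n : ℕ} (w : Fin m → Fin n) : Prop :=
  ∀ j, Even ((univ.filter fun i => w i = j).card)

instance {m n : ℕ} : DecidablePred (ewP (m := m) (n := n)) := fun w =>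
  inferInstanceAs (Decidable (∀ j, Even _))

lemma sum_fiber_card {m : ℕ} (w : Fin m → Fin n) :
    ∑ j, (univ.filter fun i => w i = j).card = m := by
  have h := Finset.card_eq_sum_card_fiberwise (f := w) (s := univ) (t := univ)
    (fun i _ => mem_univ (w i))
  simpa using h.symm

lemma even_of_ewP {m : ℕ} {w : Fin m → Fin n} (h : ewP w) : Even m := by
  rw [← sum_fiber_card w]
  exact Finset.even_sum _ (fun j _ => h j)

section step
variable {m : ℕ}

private lemma erase_nonempty (p : {w : Fin (m+2) → Fin n // ewP w}) :
    ((univ.filter fun i => p.1 i = p.1 0).erase 0).Nonempty := by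
  have h0 : (0 : Fin (m+2)) ∈ univ.filter fun i => p.1 i = p.1 0 := by simp
  have he := p.2 (p.1 0)
  have hc : 1 < (univ.filter fun i => p.1 i = p.1 0).card := by
    rcases he with ⟨r, hr⟩
    have : 0 < (univ.filter fun i => p.1 i = p.1 0).card := card_pos.mpr ⟨0, h0⟩
    omega
  rw [← Finset.card_pos, Finset.card_erase_of_mem h0]
  omega

noncomputable def pick (p : {w : Fin (m+2) → Fin n // ewP w}) : Fin (m+2) :=
  ((univ.filter fun i => p.1 i = p.1 0).erase 0).max' (erase_nonempty p)

lemma pick_mem (p : {w : Fin (m+2) → Fin n // ewP w}) :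
    pick p ∈ (univ.filter fun i => p.1 i = p.1 0).erase 0 := Finset.max'_mem _ _

lemma pick_ne (p : {w : Fin (m+2) → Fin n // ewP w}) : pick p ≠ 0 :=
  (Finset.mem_erase.mp (pick_mem p)).1

lemma pick_eq (p : {w : Fin (m+2) → Fin n // ewP w}) : p.1 (pick p) = p.1 0 := by
  have := (Finset.mem_erase.mp (pick_mem p)).2
  simpa using this

def Kset (j : Fin (m+2)) : Finset (Fin (m+2)) := ({0, j} : Finset (Fin (m+2)))ᶜ

lemma Kcard {j : Fin (m+2)} (hj : j ≠ 0) : (Kset j).card = m := by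
  have h2 : ({0, j} : Finset (Fin (m+2))).card = 2 := by
    rw [Finset.card_insert_of_notMem (by simpa using hj.symm), Finset.card_singleton]
  rw [Kset, Finset.card_compl, h2, Fintype.card_fin]
  omega

noncomputable def emb {j : Fin (m+2)} (hj : j ≠ 0) : Fin m ↪o Fin (m+2) :=
  (Kset j).orderEmbOfFin (Kcard hj)

lemma emb_mem {j : Fin (m+2)} (hj : j ≠ 0) (k : Fin m) : emb hj k ∈ Kset j :=
  Finset.orderEmbOfFin_mem _ _ _

lemma emb_surj {j : Fin (m+2)} (hj : j ≠ 0) {i : Fin (m+2)} (hi : i ∈ Kset j) :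
    ∃ k, emb hj k = i := by
  have := Finset.range_orderEmbOfFin (Kset j) (Kcard hj)
  have : i ∈ Set.range (emb hj) := by rw [emb, this]; exact hi
  exact this

lemma filter_split (j : Fin (m+2)) (P : Fin (m+2) → Prop) [DecidablePred P] :
    (univ.filter P).card
      = ((Kset j).filter P).card + (({0, j} : Finset (Fin (m+2))).filter P).card := by
  rw [← Finset.card_union_of_disjoint
      (Finset.disjoint_filter_filter disjoint_compl_left)]
  congr 1
  rw [← Finset.filter_union]
  congr 1
  rw [Kset]
  ext i
  simp only [Finset.mem_union, Finset.mem_compl, Finset.mem_univ, iff_true]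
  tauto

lemma rest_ewP (p : {w : Fin (m+2) → Fin n // ewP w}) :
    ewP (fun k => p.1 (emb (pick_ne p) k)) := by
  intro y
  have hcard : (univ.filter fun k => p.1 (emb (pick_ne p) k) = y).card
      = ((Kset (pick p)).filter fun i => p.1 i = y).card := by
    rw [← Finset.card_image_of_injective _ (emb (pick_ne p)).injective]
    congr 1
    ext i
    simp only [Finset.mem_image, Finset.mem_filter, Finset.mem_univ, true_and]
    constructor
    · rintro ⟨k, hk, rfl⟩; exact ⟨emb_mem _ k, hk⟩
    · rintro ⟨hiK, hiy⟩
      obtain ⟨k, rfl⟩ := emb_surj (pick_ne p) hiK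
      exact ⟨k, hiy, rfl⟩
  have hsplit := filter_split (pick p) (fun i => p.1 i = y)
  have hpair : ((({0, pick p} : Finset (Fin (m+2)))).filter fun i => p.1 i = y).card = 2
      ∨ ((({0, pick p} : Finset (Fin (m+2)))).filter fun i => p.1 i = y).card = 0 := by
    by_cases hy : p.1 0 = y
    · left
      have : (({0, pick p} : Finset (Fin (m+2)))).filter (fun i => p.1 i = y)
          = {0, pick p} := by
        rw [Finset.filter_eq_self]
        intro i hi
        rcases Finset.mem_insert.mp hi with rfl | hi
        · exact hy
        · rw [Finset.mem_singleton.mp hi, pick_eq p]; exact hy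
      rw [this, Finset.card_insert_of_notMem (by simpa using (pick_ne p).symm),
        Finset.card_singleton]
    · right
      rw [Finset.card_eq_zero, Finset.filter_eq_empty_iff]
      intro i hi
      rcases Finset.mem_insert.mp hi with rfl | hi
      · exact hy
      · rw [Finset.mem_singleton.mp hi, pick_eq p]; exact hy
  have hev := p.2 y
  rw [hsplit] at hev
  rw [hcard]
  rcases hev with ⟨r, hr⟩
  rcases hpair with h2 | h2 <;> rw [h2] at hr <;> (rw [Nat.even_iff]; omega)

end step

section step2
variable {m : ℕ}

lemma emb_congr {j j' : Fin (m+2)} (h : j = j') (hj : j ≠ 0) (hj' : j' ≠ 0) (k : Fin m) :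
    emb hj k = emb hj' k := by subst h; rfl

noncomputable def Phi (p : {w : Fin (m+2) → Fin n // ewP w}) :
    Fin (m+2) × Fin n × {u : Fin m → Fin n // ewP u} :=
  (pick p, p.1 0, ⟨fun k => p.1 (emb (pick_ne p) k), rest_ewP p⟩)

lemma Phi_inj : Function.Injective (Phi (m := m) (n := n)) := by
  intro p q h
  rw [Prod.ext_iff, Prod.ext_iff] at h
  obtain ⟨h1, h2, h3⟩ := h
  have h3' := congrFun (Subtype.ext_iff.mp h3)
  simp only [Phi] at h1 h2 h3'
  apply Subtype.ext
  funext i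
  by_cases hi0 : i = 0
  · subst hi0; exact h2
  by_cases hij : i = pick p
  · subst hij
    rw [pick_eq p, h2, ← pick_eq q, ← h1]
  · have hiK : i ∈ Kset (pick p) := by
      rw [Kset, Finset.mem_compl]
      simp only [Finset.mem_insert, Finset.mem_singleton]
      tauto
    obtain ⟨k, hk⟩ := emb_surj (pick_ne p) hiK
    have e1 : p.1 i = p.1 (emb (pick_ne p) k) := by rw [hk]
    have e2 : q.1 (emb (pick_ne q) k) = q.1 i := by
      rw [emb_congr h1.symm (pick_ne q) (pick_ne p), hk]
    rw [e1, h3' k, e2]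

lemma ew_step :
    Fintype.card {w : Fin (m+2) → Fin n // ewP w}
      ≤ (m+2) * (n * Fintype.card {u : Fin m → Fin n // ewP u}) := by
  have h := Fintype.card_le_of_injective _ (Phi_inj (m := m) (n := n))
  simpa [Fintype.card_prod, Fintype.card_fin] using h

end step2

lemma ew_bound (n : ℕ) : ∀ m, Fintype.card {w : Fin m → Fin n // ewP w} ≤ (m*n)^(m/2) := by
  intro m
  induction m using Nat.strong_induction_on with
  | _ m ih =>
    match m with
    | 0 =>
      calc Fintype.card {w : Fin 0 → Fin n // ewP w} ≤ Fintype.card (Fin 0 → Fin n) :=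
            Fintype.card_subtype_le _
        _ = 1 := by simp
        _ ≤ (0*n)^(0/2) := by norm_num
    | 1 =>
      have : IsEmpty {w : Fin 1 → Fin n // ewP w} := by
        constructor
        intro p
        have := even_of_ewP p.2
        simp [Nat.not_even_one] at this
      rw [Fintype.card_eq_zero]
      exact Nat.zero_le _
    | (m+2) =>
      have hstep := ew_step (m := m) (n := n)
      have hih := ih m (by omega)
      have h1 : Fintype.card {w : Fin (m+2) → Fin n // ewP w}
          ≤ (m+2) * (n * (m*n)^(m/2)) := by
        calc Fintype.card {w : Fin (m+2) → Fin n // ewP w}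
            ≤ (m+2) * (n * Fintype.card {u : Fin m → Fin n // ewP u}) := hstep
          _ ≤ (m+2) * (n * (m*n)^(m/2)) :=
              Nat.mul_le_mul_left _ (Nat.mul_le_mul_left _ hih)
      calc Fintype.card {w : Fin (m+2) → Fin n // ewP w}
          ≤ (m+2) * (n * (m*n)^(m/2)) := h1
        _ = ((m+2) * n) * (m*n)^(m/2) := by ring
        _ ≤ ((m+2) * n) * ((m+2)*n)^(m/2) := by
            apply Nat.mul_le_mul_left
            exact Nat.pow_le_pow_left (Nat.mul_le_mul_right _ (by omega)) _
        _ = ((m+2)*n)^(m/2 + 1) := by rw [pow_succ]; ring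
        _ = ((m+2)*n)^((m+2)/2) := by congr 1; omega

section gamma
variable (D n f : ℕ)

def degN (α : (Fin D → Fin n) → ℕ) (i : Fin n) : ℕ :=
  ∑ t, α t * (univ.filter fun a : Fin D => t a = i).card

def GammaP (γ : (Fin D → Fin n) → Fin 2) : Prop :=
  (∑ t, ((γ t : ℕ))) = f ∧ ∀ i, Even (degN D n (fun t => (γ t : ℕ)) i)

instance : DecidablePred (GammaP D n f) := fun γ =>
  inferInstanceAs (Decidable (_ ∧ _))

def supp (γ : (Fin D → Fin n) → Fin 2) : Finset (Fin D → Fin n) :=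
  univ.filter fun t => γ t = 1

lemma coe_fin2 : ∀ c : Fin 2, (c : ℕ) = if c = 1 then 1 else 0 := by decide

lemma fin2_cases : ∀ c : Fin 2, c = 0 ∨ c = 1 := by decide

lemma supp_card {γ : (Fin D → Fin n) → Fin 2} (h : (∑ t, ((γ t : ℕ))) = f) :
    (supp D n γ).card = f := by
  rw [supp, Finset.card_filter, ← h]
  exact Finset.sum_congr rfl fun t _ => (coe_fin2 (γ t)).symm

noncomputable def kap (s : Finset (Fin D → Fin n)) (h : s.card = f) :
    Fin f → (Fin D → Fin n) :=
  fun k => ((Fintype.equivFinOfCardEq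
    (by rw [Fintype.card_coe, h] : Fintype.card s = f)).symm k : s)

lemma kap_mem (s : Finset (Fin D → Fin n)) (h : s.card = f) (k : Fin f) :
    kap D n f s h k ∈ s := Subtype.mem _

lemma kap_inj (s : Finset (Fin D → Fin n)) (h : s.card = f) :
    Function.Injective (kap D n f s h) :=
  Subtype.val_injective.comp (Equiv.injective _)

lemma kap_surj (s : Finset (Fin D → Fin n)) (h : s.card = f) {t} (ht : t ∈ s) :
    ∃ k, kap D n f s h k = t := by
  refine ⟨Fintype.equivFinOfCardEq (by rw [Fintype.card_coe, h]) (⟨t, ht⟩ : {x // x ∈ s}), ?_⟩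
  simp [kap]

lemma kap_congr {s s' : Finset (Fin D → Fin n)} (hss : s = s') (h : s.card = f)
    (h' : s'.card = f) : kap D n f s h = kap D n f s' h' := by subst hss; rfl

lemma sum_over_supp (γ : (Fin D → Fin n) → Fin 2) (g : (Fin D → Fin n) → ℕ) :
    ∑ t ∈ supp D n γ, g t = ∑ t, ((γ t : ℕ)) * g t := by
  rw [supp, Finset.sum_filter]
  refine Finset.sum_congr rfl fun t _ => ?_
  rw [coe_fin2 (γ t)]
  by_cases h : γ t = 1 <;> simp [h]

noncomputable def chi
    (p : {γ : (Fin D → Fin n) → Fin 2 // GammaP D n f γ} × Equiv.Perm (Fin f)) :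
    Fin (D * f) → Fin n :=
  fun q => kap D n f (supp D n p.1.1) (supp_card D n f p.1.2.1)
    (p.2 ((finProdFinEquiv.symm q).2)) ((finProdFinEquiv.symm q).1)

lemma chi_ewP (p) : ewP (chi D n f p) := by
  obtain ⟨⟨γ, hγ⟩, π⟩ := p
  set κ := kap D n f (supp D n γ) (supp_card D n f hγ.1) with hκ
  intro y
  have stepA : (univ.filter fun q : Fin (D*f) => chi D n f (⟨⟨γ, hγ⟩, π⟩) q = y).card
      = (univ.filter fun r : Fin D × Fin f => κ (π r.2) r.1 = y).card := by
    refine (Finset.card_equiv finProdFinEquiv fun r => ?_).symm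
    simp only [Finset.mem_filter, Finset.mem_univ, true_and]
    simp only [chi, Equiv.symm_apply_apply, hκ]
  have stepB : (univ.filter fun r : Fin D × Fin f => κ (π r.2) r.1 = y).card
      = ∑ k : Fin f, (univ.filter fun a : Fin D => κ (π k) a = y).card := by
    rw [Finset.card_eq_sum_card_fiberwise
      (f := fun r : Fin D × Fin f => r.2) (t := univ) (fun r _ => mem_univ _)]
    refine Finset.sum_congr rfl fun k _ => ?_
    rw [← Finset.card_image_of_injective _
      (show Function.Injective (fun a : Fin D => (a, k)) from fun a b hab => by
        simpa using congrArg Prod.fst hab)]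
    congr 1
    ext r
    obtain ⟨a', k'⟩ := r
    simp only [Finset.mem_filter, Finset.mem_image, Finset.mem_univ, true_and]
    constructor
    · rintro ⟨h1, rfl⟩
      exact ⟨a', h1, rfl⟩
    · rintro ⟨a, ha, heq⟩
      cases heq
      exact ⟨ha, rfl⟩
  have stepC : ∑ k : Fin f, (univ.filter fun a : Fin D => κ (π k) a = y).card
      = degN D n (fun t => (γ t : ℕ)) y := by
    have h1 : ∑ k : Fin f, (univ.filter fun a : Fin D => κ (π k) a = y).card
        = ∑ k : Fin f, (univ.filter fun a : Fin D => κ k a = y).card :=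
      Equiv.sum_comp π (fun k => (univ.filter fun a : Fin D => κ k a = y).card)
    have h2 : ∑ k : Fin f, (univ.filter fun a : Fin D => κ k a = y).card
        = ∑ t ∈ supp D n γ, (univ.filter fun a : Fin D => t a = y).card := by
      rw [← Finset.sum_coe_sort (supp D n γ)
        (fun t => (univ.filter fun a : Fin D => t a = y).card)]
      exact Equiv.sum_comp (Fintype.equivFinOfCardEq
        (by rw [Fintype.card_coe, supp_card D n f hγ.1] :
          Fintype.card (supp D n γ) = f)).symm
        (fun x : (supp D n γ) => (univ.filter fun a : Fin D => x.1 a = y).card)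
    rw [h1, h2, sum_over_supp, degN]
  rw [stepA, stepB, stepC]
  exact hγ.2 y

lemma chi_inj : Function.Injective
    (fun p => (⟨chi D n f p, chi_ewP D n f p⟩ : {w : Fin (D*f) → Fin n // ewP w})) := by
  rintro ⟨⟨γ₁, hγ₁⟩, π₁⟩ ⟨⟨γ₂, hγ₂⟩, π₂⟩ h
  have hw : chi D n f ⟨⟨γ₁, hγ₁⟩, π₁⟩ = chi D n f ⟨⟨γ₂, hγ₂⟩, π₂⟩ := Subtype.ext_iff.mp h
  set κ₁ := kap D n f (supp D n γ₁) (supp_card D n f hγ₁.1) with hκ₁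
  set κ₂ := kap D n f (supp D n γ₂) (supp_card D n f hγ₂.1) with hκ₂
  have htup : ∀ k, κ₁ (π₁ k) = κ₂ (π₂ k) := by
    intro k
    funext a
    have := congrFun hw (finProdFinEquiv (a, k))
    simpa [chi, Equiv.symm_apply_apply] using this
  have hs : supp D n γ₁ = supp D n γ₂ := by
    ext t
    constructor
    · intro ht
      obtain ⟨k₀, hk₀⟩ := kap_surj D n f _ (supp_card D n f hγ₁.1) ht
      rw [← hκ₁] at hk₀
      have := htup (π₁.symm k₀)
      rw [Equiv.apply_symm_apply, hk₀] at this
      rw [this]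
      exact kap_mem D n f _ _ _
    · intro ht
      obtain ⟨k₀, hk₀⟩ := kap_surj D n f _ (supp_card D n f hγ₂.1) ht
      rw [← hκ₂] at hk₀
      have := htup (π₂.symm k₀)
      rw [Equiv.apply_symm_apply, hk₀] at this
      rw [← this]
      exact kap_mem D n f _ _ _
  have hγ : γ₁ = γ₂ := by
    funext t
    have hmem : (γ₁ t = 1) ↔ (γ₂ t = 1) := by
      constructor <;> intro h1
      · have : t ∈ supp D n γ₂ := hs ▸ (by simp [supp, h1])
        simpa [supp] using this
      · have : t ∈ supp D n γ₁ := hs.symm ▸ (by simp [supp, h1])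
        simpa [supp] using this
    rcases fin2_cases (γ₁ t) with e1 | e1 <;> rcases fin2_cases (γ₂ t) with e2 | e2 <;>
      simp_all
  have hκeq : κ₁ = κ₂ := by
    rw [hκ₁, hκ₂]
    exact kap_congr D n f (by rw [hγ]) _ _
  have hπ : π₁ = π₂ := by
    apply Equiv.ext
    intro k
    apply kap_inj D n f (supp D n γ₁) (supp_card D n f hγ₁.1)
    rw [show κ₁ = kap D n f (supp D n γ₁) (supp_card D n f hγ₁.1) from rfl] at htup hκeq
    rw [htup k, ← hκeq]
  subst hγ
  simp [hπ]

lemma gamma_card :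
    f.factorial * Fintype.card {γ : (Fin D → Fin n) → Fin 2 // GammaP D n f γ}
      ≤ (D * f * n)^((D*f)/2) := by
  have hle := Fintype.card_le_of_injective _ (chi_inj D n f)
  rw [Fintype.card_prod, Fintype.card_perm, Fintype.card_fin] at hle
  calc f.factorial * Fintype.card {γ : (Fin D → Fin n) → Fin 2 // GammaP D n f γ}
      = Fintype.card {γ : (Fin D → Fin n) → Fin 2 // GammaP D n f γ} * f.factorial := by ring
    _ ≤ Fintype.card {w : Fin (D*f) → Fin n // ewP w} := hle
    _ ≤ (D * f * n)^((D*f)/2) := ew_bound n (D*f)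

end gamma

lemma key_arith (u f b n : ℕ) (hn : 1 ≤ n) (he : 1 ≤ f + 2*b) (hDf : Even ((u+3) * f)) :
    (f + 2*b + 1) * (((u+3)*f*n)^((u+3)*f/2) * (2*n^(u+3))^b) ≤
    f.factorial * b.factorial *
      ((100*(u+3)*n)^((u+3)*(f+2*b)/2) * (f+2*b)^((u+1)*(f+2*b)/2)) := by
  set D := u + 3 with hD
  obtain ⟨F, hF⟩ := hDf
  have hF2 : D * f = 2 * F := by omega
  have h3f : 3 * f ≤ D * f := Nat.mul_le_mul_right f (by omega)
  have hfF : f ≤ F := by omega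
  set G := F - f with hGdef
  have hG : F = f + G := by omega
  -- exponent identities
  have hE1 : D * (f + 2*b) / 2 = F + D*b := by
    have h : D * (f + 2*b) = 2 * (F + D*b) := by
      calc D * (f+2*b) = D*f + 2*(D*b) := by ring
        _ = 2*F + 2*(D*b) := by rw [hF2]
        _ = 2*(F + D*b) := by ring
    rw [h]; exact Nat.mul_div_cancel_left _ (by norm_num)
  have huf : (u+1) * f = 2 * G := by
    have h : (u+1)*f + 2*f = 2*f + 2*G := by
      calc (u+1)*f + 2*f = D * f := by rw [hD]; ring
        _ = 2*F := hF2
        _ = 2*f + 2*G := by rw [hG]; ring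
    omega
  have hE2 : (u+1) * (f + 2*b) / 2 = G + (u+1)*b := by
    have h : (u+1) * (f + 2*b) = 2 * (G + (u+1)*b) := by
      calc (u+1)*(f+2*b) = (u+1)*f + 2*((u+1)*b) := by ring
        _ = 2*G + 2*((u+1)*b) := by rw [huf]
        _ = 2*(G + (u+1)*b) := by ring
    rw [h]; exact Nat.mul_div_cancel_left _ (by norm_num)
  have hE0 : D * f / 2 = F := by omega
  rw [hE0, hE1, hE2]
  set e' := f + 2*b with he'
  -- basic facts
  have hbDb : b ≤ D * b := Nat.le_mul_of_pos_left b (by omega)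
  have hk1 : 1 ≤ F + D * b := by
    rcases Nat.eq_zero_or_pos f with rfl | hf
    · have : 1 ≤ b := by omega
      have : 3 * b ≤ D * b := Nat.mul_le_mul_right b (by omega)
      omega
    · omega
  -- constant bound : 2 * 8^f * 8^b ≤ 100^(F + D*b)
  have hconst : 2 * 8^f * 8^b ≤ 100^(F + D*b) := by
    have h1 : (8:ℕ)^f * 8^b ≤ 8^(F + D*b) := by
      rw [← pow_add]; exact Nat.pow_le_pow_right (by norm_num) (by omega)
    have h2 : (2:ℕ) ≤ 2^(F + D*b) := by
      calc (2:ℕ) = 2^1 := rfl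
        _ ≤ 2^(F + D*b) := Nat.pow_le_pow_right (by norm_num) hk1
    calc 2 * 8^f * 8^b = 2 * (8^f * 8^b) := by ring
      _ ≤ 2^(F + D*b) * 8^(F + D*b) := Nat.mul_le_mul h2 h1
      _ = 16^(F + D*b) := by rw [← mul_pow]; norm_num
      _ ≤ 100^(F + D*b) := Nat.pow_le_pow_left (by norm_num) _
  have hp8 : e' + 1 ≤ 2 * 2^f * 4^b := by
    calc e' + 1 ≤ 2^(f + 2*b + 1) := (Nat.lt_two_pow_self (n := e' + 1)).le.trans (le_refl _)
      _ = 2^f * (2^2)^b * 2 := by rw [pow_add, pow_add, pow_mul, pow_one]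
      _ = 2 * 2^f * 4^b := by norm_num; ring
  -- main chain
  have hff : f^F = f^f * f^G := by rw [hG, pow_add]
  have hfe : f ≤ e' := by omega
  have he'1 : 1 ≤ e' := he
  calc (e' + 1) * ((D*f*n)^F * (2*n^D)^b)
      = (e' + 1) * (2^b * (f^f * f^G) * (D^F * (n^F * n^(D*b)))) := by
        rw [mul_pow, mul_pow, mul_pow, ← pow_mul, ← hff]; ring
    _ = (e' + 1) * (2^b * (f^f * f^G) * (D^F * n^(F + D*b))) := by rw [pow_add]
    _ ≤ (2 * 2^f * 4^b) * (2^b * ((4^f * f.factorial) * e'^G) * (D^F * n^(F + D*b))) := by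
        apply Nat.mul_le_mul hp8
        apply Nat.mul_le_mul_right
        apply Nat.mul_le_mul_left
        exact Nat.mul_le_mul (pow_self_le_four_pow_mul_factorial f) (Nat.pow_le_pow_left hfe G)
    _ = f.factorial * ((2 * 8^f * 8^b) * e'^G * (D^F * n^(F + D*b))) := by
        have h8f : (8:ℕ)^f = 2^f * 4^f := by rw [← mul_pow]; norm_num
        have h8b : (8:ℕ)^b = 2^b * 4^b := by rw [← mul_pow]; norm_num
        rw [h8f, h8b]; ring
    _ ≤ f.factorial * (100^(F + D*b) * e'^G * (D^F * n^(F + D*b))) := by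
        apply Nat.mul_le_mul_left
        apply Nat.mul_le_mul_right
        exact Nat.mul_le_mul_right _ hconst
    _ ≤ f.factorial * b.factorial *
          ((100^(F + D*b) * (D^(F+D*b) * n^(F + D*b))) * (e'^G * e'^((u+1)*b))) := by
        have hb1 : 1 ≤ b.factorial := Nat.one_le_iff_ne_zero.mpr b.factorial_ne_zero
        have hDm : D^F ≤ D^(F + D*b) := Nat.pow_le_pow_right (by omega) (by omega)
        have hem : (1:ℕ) ≤ e'^((u+1)*b) := Nat.one_le_pow _ _ (by omega)
        calc f.factorial * (100^(F + D*b) * e'^G * (D^F * n^(F + D*b)))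
            ≤ f.factorial * (100^(F + D*b) * e'^G * (D^(F+D*b) * n^(F + D*b))) := by
              exact Nat.mul_le_mul_left _ (Nat.mul_le_mul_left _ (Nat.mul_le_mul_right _ hDm))
          _ = (f.factorial * 1) * ((100^(F + D*b) * (D^(F+D*b) * n^(F + D*b))) * (e'^G * 1)) := by
              ring
          _ ≤ (f.factorial * b.factorial) *
              ((100^(F + D*b) * (D^(F+D*b) * n^(F + D*b))) * (e'^G * e'^((u+1)*b))) := by
              exact Nat.mul_le_mul (Nat.mul_le_mul_left _ hb1)
                (Nat.mul_le_mul_left _ (Nat.mul_le_mul_left _ hem))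
    _ = f.factorial * b.factorial * ((100*D*n)^(F + D*b) * e'^(G + (u+1)*b)) := by
        rw [mul_pow, mul_pow, pow_add]; ring

section glue
variable (D n : ℕ)

lemma deg_sum (α : (Fin D → Fin n) → ℕ) :
    ∑ i, degN D n α i = D * ∑ t, α t := by
  unfold degN
  rw [Finset.sum_comm, Finset.mul_sum]
  refine Finset.sum_congr rfl fun t _ => ?_
  rw [← Finset.mul_sum, sum_fiber_card t, Nat.mul_comm]

lemma degN_decomp (α : (Fin D → Fin n) → ℕ) (i : Fin n) :
    degN D n α i = 2 * degN D n (fun t => α t / 2) i + degN D n (fun t => α t % 2) i := by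
  unfold degN
  rw [Finset.mul_sum, ← Finset.sum_add_distrib]
  refine Finset.sum_congr rfl fun t _ => ?_
  have h := Nat.div_add_mod (α t) 2
  set c := (univ.filter fun a : Fin D => t a = i).card
  calc α t * c = (2 * (α t / 2) + α t % 2) * c := by rw [h]
    _ = 2 * (α t / 2 * c) + α t % 2 * c := by ring

lemma sum_decomp (α : (Fin D → Fin n) → ℕ) :
    ∑ t, α t = 2 * (∑ t, α t / 2) + ∑ t, α t % 2 := by
  rw [Finset.mul_sum, ← Finset.sum_add_distrib]
  exact Finset.sum_congr rfl fun t _ => (Nat.div_add_mod (α t) 2).symm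

end glue

def GammaE (D n f e : ℕ) (γ : (Fin D → Fin n) → Fin 2) : Prop :=
  GammaP D n f γ ∧ Even (e - f)

instance (D n f e : ℕ) : DecidablePred (GammaE D n f e) := fun _ =>
  inferInstanceAs (Decidable (_ ∧ _))

/-- **Counting directed `D`-uniform multihypergraphs with all degrees even.**
There is an absolute constant `C > 0` such that for all `D > 2` and `e, n ≥ 1` with
`D·e ≤ 2n`: if `D·e` is even, the number of functions `α : {1,…,n}^D → ℕ` with total edge
count `e` and all vertex degrees even is at most `(C·D·n)^(D·e/2) · e^((D/2-1)·e)`; if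
`D·e` is odd there are no such functions. -/
theorem count_even_degree_hypergraphs :
    ∃ C : ℕ, 0 < C ∧
      ∀ D e n : ℕ, 2 < D → 0 < e → 0 < n → D * e ≤ 2 * n →
        ((Even (D * e) →
            {α : (Fin D → Fin n) → ℕ |
                (∑ t : Fin D → Fin n, α t) = e ∧
                ∀ i : Fin n, Even (∑ t : Fin D → Fin n,
                  α t * (Finset.univ.filter fun a : Fin D => t a = i).card)}.Finite ∧
            {α : (Fin D → Fin n) → ℕ |
                (∑ t : Fin D → Fin n, α t) = e ∧
                ∀ i : Fin n, Even (∑ t : Fin D → Fin n,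
                  α t * (Finset.univ.filter fun a : Fin D => t a = i).card)}.ncard ≤
              (C * D * n) ^ (D * e / 2) * e ^ ((D - 2) * e / 2)) ∧
         (¬ Even (D * e) →
            {α : (Fin D → Fin n) → ℕ |
                (∑ t : Fin D → Fin n, α t) = e ∧
                ∀ i : Fin n, Even (∑ t : Fin D → Fin n,
                  α t * (Finset.univ.filter fun a : Fin D => t a = i).card)} = ∅)) := by
  refine ⟨100, by norm_num, ?_⟩
  intro D e n hD he hn hDe2n
  obtain ⟨u, rfl⟩ : ∃ u, D = u + 3 := ⟨D - 3, by omega⟩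
  set S : Set ((Fin (u+3) → Fin n) → ℕ) :=
    {α : (Fin (u+3) → Fin n) → ℕ |
        (∑ t : Fin (u+3) → Fin n, α t) = e ∧
        ∀ i : Fin n, Even (∑ t : Fin (u+3) → Fin n,
          α t * (Finset.univ.filter fun a : Fin (u+3) => t a = i).card)} with hSdef
  have hmem : ∀ α, α ∈ S ↔ ((∑ t, α t) = e ∧ ∀ i, Even (degN (u+3) n α i)) := by
    intro α; rfl
  constructor
  · -- even case
    intro _
    have hfin : S.Finite := by
      apply Set.Finite.subset
        (Set.Finite.pi (fun _ : (Fin (u+3) → Fin n) => Set.finite_Iic e))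
      intro α hα
      rw [Set.mem_pi]
      intro t _
      have h1 := ((hmem α).mp hα).1
      have h2 : α t ≤ ∑ t', α t' :=
        Finset.single_le_sum (fun t' _ => Nat.zero_le (α t')) (mem_univ t)
      simpa [Set.mem_Iic, h1] using h2.trans_eq h1
    refine ⟨hfin, ?_⟩
    -- injection into sigma type
    have he' : e ≤ n := by
      have h3 : 3 * e ≤ (u+3) * e := Nat.mul_le_mul_right e (by omega)
      omega
    let Om := Σ fv : Fin (e+1),
      ({γ : (Fin (u+3) → Fin n) → Fin 2 // GammaE (u+3) n (↑fv) e γ} ×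
        Sym (Fin (u+3) → Fin n) ((e - ↑fv)/2))
    let F : ↥S → Om := fun p =>
      ⟨⟨∑ t, p.1 t % 2, by
          have h1 : (∑ t, p.1 t % 2) ≤ ∑ t, p.1 t :=
            Finset.sum_le_sum fun t _ => Nat.mod_le _ _
          have h2 := ((hmem p.1).mp p.2).1
          omega⟩,
        ⟨fun t => (⟨p.1 t % 2, Nat.mod_lt _ (by norm_num)⟩ : Fin 2), by
          constructor
          · constructor
            · rfl
            · intro i
              have hd := degN_decomp (u+3) n p.1 i
              have hev := ((hmem p.1).mp p.2).2 i
              have hev' : Even (degN (u+3) n p.1 i) := hev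
              rw [hd] at hev'
              have : degN (u+3) n
                  (fun t => (((⟨p.1 t % 2, Nat.mod_lt _ (by norm_num)⟩ : Fin 2)) : ℕ)) i
                  = degN (u+3) n (fun t => p.1 t % 2) i := rfl
              rw [this]
              rcases hev' with ⟨r, hr⟩
              exact ⟨r - degN (u+3) n (fun t => p.1 t / 2) i, by omega⟩
          · have hsd := sum_decomp (u+3) n p.1
            have h2 := ((hmem p.1).mp p.2).1
            show Even (e - ∑ t, p.1 t % 2)
            exact ⟨∑ t, p.1 t / 2, by omega⟩⟩,
        ⟨(Finsupp.equivFunOnFinite.symm (fun t => p.1 t / 2)).toMultiset, by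
          have hcard : (Finsupp.equivFunOnFinite.symm
              (fun t : Fin (u+3) → Fin n => p.1 t / 2)).toMultiset.card
              = ∑ t, p.1 t / 2 := by
            rw [Finsupp.card_toMultiset, Finsupp.sum_fintype]
            · simp
            · intro; rfl
          have hsd := sum_decomp (u+3) n p.1
          have h2 := ((hmem p.1).mp p.2).1
          show (Finsupp.equivFunOnFinite.symm
              (fun t : Fin (u+3) → Fin n => p.1 t / 2)).toMultiset.card
            = (e - ∑ t, p.1 t % 2) / 2
          rw [hcard]
          omega⟩⟩
    have hFinj : Function.Injective F := by
      intro p q h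
      have hproj := congrArg (fun x : Om =>
        ((x.2.1.1 : (Fin (u+3) → Fin n) → Fin 2), (x.2.2 : Multiset (Fin (u+3) → Fin n)))) h
      rw [Prod.ext_iff] at hproj
      obtain ⟨hγ, hμ⟩ := hproj
      apply Subtype.ext
      funext t
      have h1 : p.1 t % 2 = q.1 t % 2 := by
        have := congrFun hγ t
        exact congrArg Fin.val this
      have h2 : p.1 t / 2 = q.1 t / 2 := by
        have hc := congrArg (Multiset.count t) hμ
        simpa [F, Finsupp.count_toMultiset] using hc
      omega
    -- cardinal chain
    have hcard1 : S.ncard ≤ Fintype.card Om := by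
      rw [← Nat.card_coe_set_eq]
      rw [← Nat.card_eq_fintype_card]
      exact Nat.card_le_card_of_injective F hFinj
    -- per-index bound
    have key : ∀ fv : Fin (e+1),
        (e+1) * (Fintype.card {γ : (Fin (u+3) → Fin n) → Fin 2 // GammaE (u+3) n (↑fv) e γ}
          * Fintype.card (Sym (Fin (u+3) → Fin n) ((e - ↑fv)/2)))
        ≤ (100 * (u+3) * n) ^ ((u+3) * e / 2) * e ^ (((u+3) - 2) * e / 2) := by
      intro fv
      rcases Nat.eq_zero_or_pos
        (Fintype.card {γ : (Fin (u+3) → Fin n) → Fin 2 // GammaE (u+3) n (↑fv) e γ})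
        with h0 | hpos
      · rw [h0]; simp
      · obtain ⟨⟨γ, hγ⟩⟩ := Fintype.card_pos_iff.mp hpos
        have hfe : (fv : ℕ) ≤ e := Nat.lt_succ_iff.mp fv.2
        obtain ⟨r, hr⟩ := hγ.2
        set b := (e - (fv : ℕ)) / 2 with hb
        have hbe : e = (fv : ℕ) + 2*b := by omega
        have hDfEven : Even ((u+3) * (fv : ℕ)) := by
          have h1 := deg_sum (u+3) n (fun t => ((γ t : ℕ)))
          rw [hγ.1.1] at h1
          rw [← h1]
          exact Finset.even_sum _ fun i _ => hγ.1.2 i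
        have hg1 : Fintype.card {γ : (Fin (u+3) → Fin n) → Fin 2 // GammaE (u+3) n (↑fv) e γ}
            ≤ Fintype.card {γ : (Fin (u+3) → Fin n) → Fin 2 // GammaP (u+3) n (↑fv) γ} :=
          Fintype.card_subtype_mono _ _ (fun x hx => hx.1)
        have hg2 := gamma_card (u+3) n (fv : ℕ)
        have hsym : b.factorial * Fintype.card (Sym (Fin (u+3) → Fin n) b)
            ≤ (2 * n^(u+3))^b := by
          have hN : n ≤ n^(u+3) := Nat.le_self_pow (by omega) n
          have hbN : b ≤ n^(u+3) := by omega
          rw [Sym.card_sym_eq_choose, Fintype.card_fun, Fintype.card_fin, Fintype.card_fin]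
          calc b.factorial * (n^(u+3) + b - 1).choose b
              = (n^(u+3) + b - 1).descFactorial b :=
                (Nat.descFactorial_eq_factorial_mul_choose _ _).symm
            _ ≤ (n^(u+3) + b - 1)^b := Nat.descFactorial_le_pow _ _
            _ ≤ (2 * n^(u+3))^b := Nat.pow_le_pow_left (by omega) _
        have harith := key_arith u (fv : ℕ) b n hn (by omega) hDfEven
        have h23 : (u + 3) - 2 = u + 1 := by omega
        set A := Fintype.card {γ : (Fin (u+3) → Fin n) → Fin 2 // GammaE (u+3) n (↑fv) e γ}
          with hA
        set Bc := Fintype.card (Sym (Fin (u+3) → Fin n) ((e - (fv:ℕ))/2)) with hBc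
        have hfac : 0 < (fv : ℕ).factorial * b.factorial :=
          Nat.mul_pos (Nat.factorial_pos _) (Nat.factorial_pos _)
        apply Nat.le_of_mul_le_mul_right _ hfac
        calc (e+1) * (A * Bc) * ((fv : ℕ).factorial * b.factorial)
            = (e+1) * (((fv : ℕ).factorial * A) * (b.factorial * Bc)) := by ring
          _ ≤ (e+1) * ((((u+3) * (fv:ℕ) * n)^((u+3)*(fv:ℕ)/2)) * (2 * n^(u+3))^b) := by
              apply Nat.mul_le_mul_left
              apply Nat.mul_le_mul _ hsym
              exact le_trans (Nat.mul_le_mul_left _ hg1) hg2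
          _ = ((fv:ℕ) + 2*b + 1) * ((((u+3) * (fv:ℕ) * n)^((u+3)*(fv:ℕ)/2))
                * (2 * n^(u+3))^b) := by rw [← hbe]
          _ ≤ (fv:ℕ).factorial * b.factorial *
                ((100*(u+3)*n)^((u+3)*((fv:ℕ)+2*b)/2) * ((fv:ℕ)+2*b)^((u+1)*((fv:ℕ)+2*b)/2))
              := harith
          _ = (100 * (u+3) * n) ^ ((u+3) * e / 2) * e ^ (((u+3) - 2) * e / 2)
                * ((fv : ℕ).factorial * b.factorial) := by
              rw [← hbe, h23]; ring
    -- sum over sigma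
    have hsum : Fintype.card Om
        ≤ (100 * (u+3) * n) ^ ((u+3) * e / 2) * e ^ (((u+3) - 2) * e / 2) := by
      have hOm : Fintype.card Om = ∑ fv : Fin (e+1),
          (Fintype.card {γ : (Fin (u+3) → Fin n) → Fin 2 // GammaE (u+3) n (↑fv) e γ}
            * Fintype.card (Sym (Fin (u+3) → Fin n) ((e - ↑fv)/2))) := by
        rw [Fintype.card_sigma]
        exact Finset.sum_congr rfl fun _ _ => Fintype.card_prod _ _
      rw [hOm]
      obtain ⟨f₀, hf₀⟩ := Finite.exists_max (fun fv : Fin (e+1) =>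
        Fintype.card {γ : (Fin (u+3) → Fin n) → Fin 2 // GammaE (u+3) n (↑fv) e γ}
          * Fintype.card (Sym (Fin (u+3) → Fin n) ((e - ↑fv)/2)))
      calc _ ≤ (univ : Finset (Fin (e+1))).card •
            (Fintype.card {γ : (Fin (u+3) → Fin n) → Fin 2 // GammaE (u+3) n (↑f₀) e γ}
              * Fintype.card (Sym (Fin (u+3) → Fin n) ((e - ↑f₀)/2))) :=
            Finset.sum_le_card_nsmul _ _ _ (fun x _ => hf₀ x)
        _ = (e+1) * (Fintype.card {γ : (Fin (u+3) → Fin n) → Fin 2 // GammaE (u+3) n (↑f₀) e γ}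
              * Fintype.card (Sym (Fin (u+3) → Fin n) ((e - ↑f₀)/2))) := by
            rw [Finset.card_univ, Fintype.card_fin, smul_eq_mul]
        _ ≤ _ := key f₀
    exact hcard1.trans hsum
  · -- odd case
    intro hodd
    ext α
    simp only [Set.mem_empty_iff_false, iff_false]
    intro hα
    apply hodd
    obtain ⟨hsum, hev⟩ := (hmem α).mp hα
    have h1 := deg_sum (u+3) n α
    rw [hsum] at h1
    rw [← h1]
    exact Finset.even_sum _ fun i _ => hev i
end
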